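/- arXiv:1010.0642 — 3 statements merged into one kernel-verified Lean document; each statement's English description precedes it below -/
import Mathlib

section
/- Single-user error exponent (Corollary 1). Fix a finite rate set {r_1,…,r_M} ⊂ [0,∞), input distributions P_{X|r} on 𝒳, and an operation region 𝓡 ⊆ {r_1,…,r_M} with 𝓡 and its complement nonempty. Then there exists a sequence of decoders (D_N)_{N≥1}, one for each block length N, such that liminf_{N→∞} −(1/N)·log P_es(D_N) ≥ min{ min_{r∈𝓡, r̃∈𝓡} E_m(r̃, P_{X|r}, P_{X|r̃}), min_{r∈𝓡, r̃∈{r_1,…,r_M}∖𝓡} E_i(r, P_{X|r}, P_{X|r̃}) }. -/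
open scoped BigOperators Classical

noncomputable section

/-- `W` is a discrete memoryless channel from `𝓧` to `𝓨`. -/
def IsDMC {𝓧 𝓨 : Type*} [Fintype 𝓨] (W : 𝓧 → 𝓨 → ℝ) : Prop :=
  (∀ x y, 0 ≤ W x y) ∧ ∀ x, ∑ y, W x y = 1

/-- `P` is a probability distribution on `𝓧`. -/
def IsDist {𝓧 : Type*} [Fintype 𝓧] (P : 𝓧 → ℝ) : Prop :=
  (∀ x, 0 ≤ P x) ∧ ∑ x, P x = 1

/-- The `N`-fold memoryless extension `W^N(y|x)`. -/
def Wn {𝓧 𝓨 : Type*} (W : 𝓧 → 𝓨 → ℝ) {N : ℕ} (x : Fin N → 𝓧) (y : Fin N → 𝓨) : ℝ :=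
  ∏ j, W (x j) (y j)

/-- Number of messages of rate class `i`: `⌊e^{N r_i}⌋`. -/
def numMsg {M : ℕ} (N : ℕ) (rate : Fin M → ℝ) (i : Fin M) : ℕ :=
  ⌊Real.exp (N * rate i)⌋₊

/-- A realization of the random access codebook at block length `N`. -/
abbrev Cbk (𝓧 : Type*) {M : ℕ} (N : ℕ) (rate : Fin M → ℝ) : Type _ :=
  (i : Fin M) → Fin (numMsg N rate i) → Fin N → 𝓧

/-- A message–rate pair `(w, r)`. -/
abbrev Msg {M : ℕ} (N : ℕ) (rate : Fin M → ℝ) : Type :=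
  (i : Fin M) × Fin (numMsg N rate i)

/-- The probability of a codebook realization: all codeword symbols are independent,
the symbols of codewords of rate class `i` being distributed as `Pd i`. -/
def cbkProb {𝓧 : Type*} [Fintype 𝓧] {M N : ℕ} (rate : Fin M → ℝ)
    (Pd : Fin M → 𝓧 → ℝ) (c : Cbk 𝓧 N rate) : ℝ :=
  ∏ i, ∏ w, ∏ j, Pd i (c i w j)

/-- The probability of the event `E` of the codebook and the channel output,
when the message–rate pair `p` is transmitted. -/
def prTx {𝓧 𝓨 : Type*} [Fintype 𝓧] [Fintype 𝓨] (W : 𝓧 → 𝓨 → ℝ) {M N : ℕ}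
    (rate : Fin M → ℝ) (Pd : Fin M → 𝓧 → ℝ) (p : Msg N rate)
    (E : Cbk 𝓧 N rate → (Fin N → 𝓨) → Prop) : ℝ :=
  ∑ c : Cbk 𝓧 N rate, ∑ y : Fin N → 𝓨,
    cbkProb rate Pd c * Wn W (c p.1 p.2) y * (if E c y then (1:ℝ) else 0)

/-- The system error probability of the decoder `D`: the maximum, over all transmitted
message–rate pairs, of the decoding error probability (for rates in the operation
region `R`) and of the collision miss detection probability (for rates outside `R`). -/
def Pes {𝓧 𝓨 : Type*} [Fintype 𝓧] [Fintype 𝓨] (W : 𝓧 → 𝓨 → ℝ) {M : ℕ} (N : ℕ)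
    (rate : Fin M → ℝ) (Pd : Fin M → 𝓧 → ℝ) (R : Finset (Fin M))
    (D : Cbk 𝓧 N rate → (Fin N → 𝓨) → Option (Msg N rate)) : ℝ :=
  sSup (Set.range (fun p : Msg N rate =>
    if p.1 ∈ R then prTx W rate Pd p (fun c y => D c y ≠ some p)
    else prTx W rate Pd p (fun c y => D c y ≠ none)))

/-- The exponent `E_m(r̃, P, Q)`. -/
def Em {𝓧 𝓨 : Type*} [Fintype 𝓧] [Fintype 𝓨] (W : 𝓧 → 𝓨 → ℝ)
    (rt : ℝ) (P Q : 𝓧 → ℝ) : ℝ :=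
  sSup ((fun ρ => -ρ * rt +
    sSup ((fun s => -Real.log (∑ y : 𝓨,
        (∑ x : 𝓧, P x * W x y ^ (1 - s)) *
          (∑ x : 𝓧, Q x * W x y ^ (s / ρ)) ^ ρ)) '' Set.Ioc (0:ℝ) 1)) '' Set.Ioc (0:ℝ) 1)

/-- The exponent `E_i(r, P, Q)`. -/
def Ei {𝓧 𝓨 : Type*} [Fintype 𝓧] [Fintype 𝓨] (W : 𝓧 → 𝓨 → ℝ)
    (r : ℝ) (P Q : 𝓧 → ℝ) : ℝ :=
  sSup ((fun ρ =>
    sSup ((fun s => -ρ * r - Real.log (∑ y : 𝓨,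
        (∑ x : 𝓧, P x * W x y ^ (s / (s + ρ))) ^ (s + ρ) *
          (∑ x : 𝓧, Q x * W x y) ^ (1 - s))) '' Set.Ioc (0:ℝ) (1 - ρ))) '' Set.Ioo (0:ℝ) 1)


/-! ### Auxiliary development -/

open Finset Real

set_option linter.unusedSectionVars false
set_option linter.unusedVariables false
set_option maxHeartbeats 1000000

section RACaux

variable {𝓧 𝓨 : Type*} [Fintype 𝓧] [Fintype 𝓨]

/-- Output distribution `(QW)(y)`. -/
def QWy (W : 𝓧 → 𝓨 → ℝ) (Q : 𝓧 → ℝ) (y : 𝓨) : ℝ := ∑ x, Q x * W x y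

/-- Product probability of a string. -/
def strP (P : 𝓧 → ℝ) {N : ℕ} (z : Fin N → 𝓧) : ℝ := ∏ j, P (z j)

/-- Product output probability of a string. -/
def statY (W : 𝓧 → 𝓨 → ℝ) (Q : 𝓧 → ℝ) {N : ℕ} (y : Fin N → 𝓨) : ℝ :=
  ∏ j, QWy W Q (y j)

lemma sum_fn_prod {ι : Type*} [Fintype ι] [DecidableEq ι] {κ : ι → Type*} [∀ i, Fintype (κ i)]
    (g : ∀ i, κ i → ℝ) :
    ∑ f : ∀ i, κ i, ∏ i, g i (f i) = ∏ i, ∑ b, g i b := (Fintype.prod_sum g).symm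

lemma W_le_one {W : 𝓧 → 𝓨 → ℝ} (hW : IsDMC W) (x : 𝓧) (y : 𝓨) : W x y ≤ 1 := by
  rw [← hW.2 x]
  exact Finset.single_le_sum (fun y' _ => hW.1 x y') (Finset.mem_univ y)

lemma Wn_nonneg {W : 𝓧 → 𝓨 → ℝ} (hW : IsDMC W) {N : ℕ} (z : Fin N → 𝓧) (y : Fin N → 𝓨) :
    0 ≤ Wn W z y :=
  Finset.prod_nonneg fun j _ => hW.1 _ _

lemma Wn_le_one {W : 𝓧 → 𝓨 → ℝ} (hW : IsDMC W) {N : ℕ} (z : Fin N → 𝓧) (y : Fin N → 𝓨) :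
    Wn W z y ≤ 1 :=
  Finset.prod_le_one (fun j _ => hW.1 _ _) (fun j _ => W_le_one hW _ _)

lemma strP_nonneg {P : 𝓧 → ℝ} (hP : ∀ x, 0 ≤ P x) {N : ℕ} (z : Fin N → 𝓧) : 0 ≤ strP P z :=
  Finset.prod_nonneg fun j _ => hP _

lemma strP_sum_one {P : 𝓧 → ℝ} (hP : IsDist P) (N : ℕ) :
    ∑ z : Fin N → 𝓧, strP P z = 1 := by
  unfold strP
  rw [sum_fn_prod (κ := fun _ : Fin N => 𝓧) (fun _ x => P x)]
  simp [hP.2]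

lemma QWy_nonneg {W : 𝓧 → 𝓨 → ℝ} (hW : IsDMC W) {Q : 𝓧 → ℝ} (hQ : ∀ x, 0 ≤ Q x) (y : 𝓨) :
    0 ≤ QWy W Q y :=
  Finset.sum_nonneg fun x _ => mul_nonneg (hQ x) (hW.1 x y)

lemma statY_nonneg {W : 𝓧 → 𝓨 → ℝ} (hW : IsDMC W) {Q : 𝓧 → ℝ} (hQ : ∀ x, 0 ≤ Q x) {N : ℕ}
    (y : Fin N → 𝓨) : 0 ≤ statY W Q y :=
  Finset.prod_nonneg fun j _ => QWy_nonneg hW hQ _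

lemma cbkProb_nonneg {M N : ℕ} {rate : Fin M → ℝ} {Pd : Fin M → 𝓧 → ℝ}
    (hPd : ∀ i x, 0 ≤ Pd i x) (c : Cbk 𝓧 N rate) : 0 ≤ cbkProb rate Pd c :=
  Finset.prod_nonneg fun i _ => Finset.prod_nonneg fun w _ =>
    Finset.prod_nonneg fun j _ => hPd i _

/-- Master marginalization identity for the random codebook. -/
lemma tiltProd {M N : ℕ} (rate : Fin M → ℝ) (Pd : Fin M → 𝓧 → ℝ)
    (hPd : ∀ i, ∑ z : Fin N → 𝓧, strP (Pd i) z = 1)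
    (SS : Finset (Msg N rate)) (F : Msg N rate → (Fin N → 𝓧) → ℝ) :
    ∑ c : Cbk 𝓧 N rate, cbkProb rate Pd c * ∏ q ∈ SS, F q (c q.1 q.2)
      = ∏ q ∈ SS, ∑ z : Fin N → 𝓧, strP (Pd q.1) z * F q z := by
  have key : ∀ c : Cbk 𝓧 N rate, cbkProb rate Pd c * ∏ q ∈ SS, F q (c q.1 q.2)
      = ∏ i, ∏ w, (strP (Pd i) (c i w) *
          if (⟨i, w⟩ : Msg N rate) ∈ SS then F ⟨i, w⟩ (c i w) else 1) := by
    intro c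
    simp only [Finset.prod_mul_distrib]
    congr 1
    rw [Finset.prod_sigma' (Finset.univ : Finset (Fin M)) (fun _ => Finset.univ)
      (fun i w => if (⟨i, w⟩ : Msg N rate) ∈ SS then F ⟨i, w⟩ (c i w) else 1),
      Finset.univ_sigma_univ]
    rw [Finset.prod_ite_mem Finset.univ SS (fun q => F q (c q.1 q.2)), Finset.univ_inter]
  calc ∑ c : Cbk 𝓧 N rate, cbkProb rate Pd c * ∏ q ∈ SS, F q (c q.1 q.2)
      = ∑ c : Cbk 𝓧 N rate, ∏ i, (∏ w, (strP (Pd i) (c i w) *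
          if (⟨i, w⟩ : Msg N rate) ∈ SS then F ⟨i, w⟩ (c i w) else 1)) := by
        exact Finset.sum_congr rfl fun c _ => key c
    _ = ∏ i, ∑ row : Fin (numMsg N rate i) → (Fin N → 𝓧), ∏ w, (strP (Pd i) (row w) *
          if (⟨i, w⟩ : Msg N rate) ∈ SS then F ⟨i, w⟩ (row w) else 1) := by
        exact sum_fn_prod (κ := fun i => Fin (numMsg N rate i) → Fin N → 𝓧)
          (fun i row => ∏ w, (strP (Pd i) (row w) *
            if (⟨i, w⟩ : Msg N rate) ∈ SS then F ⟨i, w⟩ (row w) else 1))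
    _ = ∏ i, ∏ w, ∑ z : Fin N → 𝓧, (strP (Pd i) z *
          if (⟨i, w⟩ : Msg N rate) ∈ SS then F ⟨i, w⟩ z else 1) := by
        refine Finset.prod_congr rfl fun i _ => ?_
        exact sum_fn_prod (κ := fun _ : Fin (numMsg N rate i) => Fin N → 𝓧)
          (fun w z => (strP (Pd i) z *
            if (⟨i, w⟩ : Msg N rate) ∈ SS then F ⟨i, w⟩ z else 1))
    _ = ∏ q ∈ SS, ∑ z : Fin N → 𝓧, strP (Pd q.1) z * F q z := by
        rw [Finset.prod_sigma' (Finset.univ : Finset (Fin M)) (fun _ => Finset.univ)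
          (fun i w => ∑ z : Fin N → 𝓧, (strP (Pd i) z *
            if (⟨i, w⟩ : Msg N rate) ∈ SS then F ⟨i, w⟩ z else 1)),
          Finset.univ_sigma_univ]
        have : ∀ q : Msg N rate, (∑ z : Fin N → 𝓧, (strP (Pd q.1) z *
            if q ∈ SS then F q z else 1))
            = if q ∈ SS then ∑ z : Fin N → 𝓧, strP (Pd q.1) z * F q z else 1 := by
          intro q
          by_cases h : q ∈ SS <;> simp [h, hPd q.1]
        calc ∏ q : Msg N rate, ∑ z : Fin N → 𝓧, (strP (Pd q.1) z *
              if q ∈ SS then F q z else 1)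
            = ∏ q : Msg N rate, (if q ∈ SS then ∑ z : Fin N → 𝓧, strP (Pd q.1) z * F q z
              else 1) := Finset.prod_congr rfl fun q _ => this q
          _ = ∏ q ∈ SS, ∑ z : Fin N → 𝓧, strP (Pd q.1) z * F q z := by
              rw [Finset.prod_ite_mem Finset.univ SS _, Finset.univ_inter]

end RACaux

section RACaux2

variable {𝓧 𝓨 : Type*} [Fintype 𝓧] [Fintype 𝓨]

set_option linter.unusedSectionVars false
set_option maxHeartbeats 1000000

/-- Two-point Hölder inequality for finite sums. -/
lemma hold2 {ι : Type*} (s : Finset ι) (a b : ι → ℝ) (β : ℝ) (hβ0 : 0 ≤ β) (hβ1 : β ≤ 1)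
    (ha : ∀ i ∈ s, 0 ≤ a i) (hb : ∀ i ∈ s, 0 ≤ b i) :
    ∑ i ∈ s, a i ^ (1 - β) * b i ^ β ≤ (∑ i ∈ s, a i) ^ (1 - β) * (∑ i ∈ s, b i) ^ β := by
  rcases eq_or_lt_of_le hβ0 with h0 | h0
  · simp [← h0]
  rcases eq_or_lt_of_le hβ1 with h1 | h1
  · simp [h1]
  have hA : 0 ≤ ∑ i ∈ s, a i := Finset.sum_nonneg ha
  have hB : 0 ≤ ∑ i ∈ s, b i := Finset.sum_nonneg hb
  rcases eq_or_lt_of_le hA with hA0 | hA0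
  · have : ∀ i ∈ s, a i = 0 := by
      intro i hi
      exact (Finset.sum_eq_zero_iff_of_nonneg ha).1 hA0.symm i hi
    have hL : ∑ i ∈ s, a i ^ (1 - β) * b i ^ β = 0 := by
      refine Finset.sum_eq_zero fun i hi => ?_
      rw [this i hi, Real.zero_rpow (by linarith), zero_mul]
    rw [hL, ← hA0, Real.zero_rpow (by linarith : (1:ℝ) - β ≠ 0), zero_mul]
  rcases eq_or_lt_of_le hB with hB0 | hB0
  · have : ∀ i ∈ s, b i = 0 := by
      intro i hi
      exact (Finset.sum_eq_zero_iff_of_nonneg hb).1 hB0.symm i hi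
    have hL : ∑ i ∈ s, a i ^ (1 - β) * b i ^ β = 0 := by
      refine Finset.sum_eq_zero fun i hi => ?_
      rw [this i hi, Real.zero_rpow (ne_of_gt h0), mul_zero]
    rw [hL, ← hB0, Real.zero_rpow (ne_of_gt h0), mul_zero]
  set A := ∑ i ∈ s, a i with hAdef
  set B := ∑ i ∈ s, b i with hBdef
  have hApow : (0:ℝ) < A ^ (1 - β) := Real.rpow_pos_of_pos hA0 _
  have hBpow : (0:ℝ) < B ^ β := Real.rpow_pos_of_pos hB0 _
  have key : ∀ i ∈ s, a i ^ (1 - β) * b i ^ β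
      ≤ A ^ (1 - β) * B ^ β * ((1 - β) * (a i / A) + β * (b i / B)) := by
    intro i hi
    have hgm := Real.geom_mean_le_arith_mean2_weighted (by linarith : (0:ℝ) ≤ 1 - β)
      hβ0 (div_nonneg (ha i hi) hA) (div_nonneg (hb i hi) hB) (by ring)
    have hid : (a i / A) ^ (1 - β) * (b i / B) ^ β
        = a i ^ (1 - β) * b i ^ β / (A ^ (1 - β) * B ^ β) := by
      rw [Real.div_rpow (ha i hi) hA, Real.div_rpow (hb i hi) hB]
      ring
    rw [hid] at hgm
    calc a i ^ (1 - β) * b i ^ β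
        = a i ^ (1 - β) * b i ^ β / (A ^ (1 - β) * B ^ β) * (A ^ (1 - β) * B ^ β) := by
          field_simp
      _ ≤ ((1 - β) * (a i / A) + β * (b i / B)) * (A ^ (1 - β) * B ^ β) := by
          apply mul_le_mul_of_nonneg_right hgm (le_of_lt (mul_pos hApow hBpow))
      _ = A ^ (1 - β) * B ^ β * ((1 - β) * (a i / A) + β * (b i / B)) := by ring
  calc ∑ i ∈ s, a i ^ (1 - β) * b i ^ β
      ≤ ∑ i ∈ s, A ^ (1 - β) * B ^ β * ((1 - β) * (a i / A) + β * (b i / B)) :=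
        Finset.sum_le_sum key
    _ = A ^ (1 - β) * B ^ β * ((1 - β) * (A / A) + β * (B / B)) := by
        rw [← Finset.mul_sum]
        congr 1
        rw [Finset.sum_add_distrib, ← Finset.mul_sum, ← Finset.mul_sum, ← Finset.sum_div,
          ← Finset.sum_div]
    _ = A ^ (1 - β) * B ^ β := by
        rw [div_self (ne_of_gt hA0), div_self (ne_of_gt hB0)]; ring
  
/-- Jensen-type inequality `∑ w Z^ρ ≤ (∑w)^(1-ρ) (∑ w Z)^ρ` for `ρ ∈ (0,1]`. -/
lemma sum_mul_rpow_le {ι : Type*} (s : Finset ι) (w Z : ι → ℝ) (ρ : ℝ)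
    (hρ0 : 0 < ρ) (hρ1 : ρ ≤ 1) (hw : ∀ i ∈ s, 0 ≤ w i) (hZ : ∀ i ∈ s, 0 ≤ Z i) :
    ∑ i ∈ s, w i * Z i ^ ρ ≤ (∑ i ∈ s, w i) ^ (1 - ρ) * (∑ i ∈ s, w i * Z i) ^ ρ := by
  have := hold2 s w (fun i => w i * Z i) ρ (le_of_lt hρ0) hρ1 hw
    (fun i hi => mul_nonneg (hw i hi) (hZ i hi))
  have hpt : ∀ i ∈ s, w i ^ (1 - ρ) * (w i * Z i) ^ ρ = w i * Z i ^ ρ := by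
    intro i hi
    rcases eq_or_lt_of_le (hw i hi) with h | h
    · rcases eq_or_lt_of_le hρ1 with h1 | h1
      · rw [← h, h1]; simp
      · rw [← h, Real.zero_rpow (by linarith : (1:ℝ) - ρ ≠ 0), zero_mul, zero_mul]
    · rw [Real.mul_rpow (le_of_lt h) (hZ i hi), ← mul_assoc,
        ← Real.rpow_add h, sub_add_cancel, Real.rpow_one]
  rw [← Finset.sum_congr rfl hpt]
  exact this

end RACaux2

section RACprTx

variable {𝓧 𝓨 : Type*} [Fintype 𝓧] [Fintype 𝓨]
variable {W : 𝓧 → 𝓨 → ℝ} {M : ℕ} {rate : Fin M → ℝ} {Pd : Fin M → 𝓧 → ℝ}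

set_option linter.unusedSectionVars false
set_option maxHeartbeats 1000000

lemma Wn_sum_one (hW : IsDMC W) {N : ℕ} (z : Fin N → 𝓧) :
    ∑ y : Fin N → 𝓨, Wn W z y = 1 := by
  unfold Wn
  rw [sum_fn_prod (κ := fun _ : Fin N => 𝓨) (fun j y => W (z j) y)]
  simp [hW.2]

lemma prTx_nonneg (hW : IsDMC W) (hPd : ∀ i x, 0 ≤ Pd i x) {N : ℕ} (p : Msg N rate)
    (E : Cbk 𝓧 N rate → (Fin N → 𝓨) → Prop) : 0 ≤ prTx W rate Pd p E := by
  refine Finset.sum_nonneg fun c _ => Finset.sum_nonneg fun y _ => ?_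
  refine mul_nonneg (mul_nonneg (cbkProb_nonneg hPd c) (Wn_nonneg hW _ _)) ?_
  split <;> norm_num

lemma prTx_eq_one (hW : IsDMC W) (hPd : ∀ i, IsDist (Pd i)) {N : ℕ} (p : Msg N rate) :
    prTx W rate Pd p (fun _ _ => True) = 1 := by
  unfold prTx
  simp only [if_pos trivial, mul_one]
  have : ∀ c : Cbk 𝓧 N rate, ∑ y : Fin N → 𝓨, cbkProb rate Pd c * Wn W (c p.1 p.2) y
      = cbkProb rate Pd c := by
    intro c
    rw [← Finset.mul_sum, Wn_sum_one hW, mul_one]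
  rw [Finset.sum_congr rfl fun c _ => this c]
  have h0 := tiltProd rate Pd (fun i => strP_sum_one (hPd i) N)
    (∅ : Finset (Msg N rate)) (fun _ _ => 1)
  simp only [Finset.prod_empty, mul_one] at h0
  exact h0

lemma prTx_mono (hW : IsDMC W) (hPd : ∀ i x, 0 ≤ Pd i x) {N : ℕ} (p : Msg N rate)
    {E E' : Cbk 𝓧 N rate → (Fin N → 𝓨) → Prop} (h : ∀ c y, E c y → E' c y) :
    prTx W rate Pd p E ≤ prTx W rate Pd p E' := by
  refine Finset.sum_le_sum fun c _ => Finset.sum_le_sum fun y _ => ?_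
  have h1 : (0:ℝ) ≤ cbkProb rate Pd c * Wn W (c p.1 p.2) y :=
    mul_nonneg (cbkProb_nonneg hPd c) (Wn_nonneg hW _ _)
  refine mul_le_mul_of_nonneg_left ?_ h1
  by_cases hE : E c y
  · rw [if_pos hE, if_pos (h c y hE)]
  · rw [if_neg hE]
    split <;> norm_num

lemma prTx_le_one (hW : IsDMC W) (hPd : ∀ i, IsDist (Pd i)) {N : ℕ} (p : Msg N rate)
    (E : Cbk 𝓧 N rate → (Fin N → 𝓨) → Prop) : prTx W rate Pd p E ≤ 1 :=
  le_trans (prTx_mono hW (fun i x => (hPd i).1 x) p (fun _ _ _ => trivial))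
    (le_of_eq (prTx_eq_one hW hPd p))

lemma prTx_le_sum (hW : IsDMC W) (hPd : ∀ i x, 0 ≤ Pd i x) {N : ℕ} (p : Msg N rate)
    {K : Type*} (ks : Finset K) (E : Cbk 𝓧 N rate → (Fin N → 𝓨) → Prop)
    (Ek : K → Cbk 𝓧 N rate → (Fin N → 𝓨) → Prop)
    (h : ∀ c y, E c y → ∃ k ∈ ks, Ek k c y) :
    prTx W rate Pd p E ≤ ∑ k ∈ ks, prTx W rate Pd p (Ek k) := by
  have step1 : prTx W rate Pd p E ≤ ∑ c : Cbk 𝓧 N rate, ∑ y : Fin N → 𝓨,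
      cbkProb rate Pd c * Wn W (c p.1 p.2) y * ∑ k ∈ ks, (if Ek k c y then (1:ℝ) else 0) := by
    unfold prTx
    refine Finset.sum_le_sum fun c _ => ?_
    refine Finset.sum_le_sum fun y _ => ?_
    have h1 : (0:ℝ) ≤ cbkProb rate Pd c * Wn W (c p.1 p.2) y :=
      mul_nonneg (cbkProb_nonneg hPd c) (Wn_nonneg hW _ _)
    refine mul_le_mul_of_nonneg_left ?_ h1
    by_cases hE : E c y
    · rw [if_pos hE]
      obtain ⟨k0, hk0, hEk⟩ := h c y hE
      calc (1:ℝ) = if Ek k0 c y then (1:ℝ) else 0 := by rw [if_pos hEk]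
        _ ≤ ∑ k ∈ ks, if Ek k c y then (1:ℝ) else 0 := by
            refine Finset.single_le_sum (f := fun k => if Ek k c y then (1:ℝ) else 0)
              (fun k _ => ?_) hk0
            split <;> norm_num
    · rw [if_neg hE]
      refine Finset.sum_nonneg fun k _ => ?_
      split <;> norm_num
  refine le_trans step1 (le_of_eq ?_)
  calc ∑ c : Cbk 𝓧 N rate, ∑ y : Fin N → 𝓨,
      cbkProb rate Pd c * Wn W (c p.1 p.2) y * ∑ k ∈ ks, (if Ek k c y then (1:ℝ) else 0)
      = ∑ c : Cbk 𝓧 N rate, ∑ y : Fin N → 𝓨, ∑ k ∈ ks,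
        cbkProb rate Pd c * Wn W (c p.1 p.2) y * (if Ek k c y then (1:ℝ) else 0) := by
        refine Finset.sum_congr rfl fun c _ => Finset.sum_congr rfl fun y _ => ?_
        rw [Finset.mul_sum]
    _ = ∑ c : Cbk 𝓧 N rate, ∑ k ∈ ks, ∑ y : Fin N → 𝓨,
        cbkProb rate Pd c * Wn W (c p.1 p.2) y * (if Ek k c y then (1:ℝ) else 0) := by
        refine Finset.sum_congr rfl fun c _ => ?_
        rw [Finset.sum_comm]
    _ = ∑ k ∈ ks, prTx W rate Pd p (Ek k) := by
        rw [Finset.sum_comm]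
        rfl

end RACprTx

section RACletter

variable {𝓧 𝓨 : Type*} [Fintype 𝓧] [Fintype 𝓨]

set_option linter.unusedSectionVars false
set_option maxHeartbeats 1000000

/-- Single-letter quantity appearing in `Em`. -/
def Asum (W : 𝓧 → 𝓨 → ℝ) (P Q : 𝓧 → ℝ) (ρ s : ℝ) : ℝ :=
  ∑ y : 𝓨, (∑ x : 𝓧, P x * W x y ^ (1 - s)) * (∑ x : 𝓧, Q x * W x y ^ (s / ρ)) ^ ρ

/-- Single-letter quantity appearing in `Ei`. -/
def Bsum (W : 𝓧 → 𝓨 → ℝ) (P Q : 𝓧 → ℝ) (ρ s : ℝ) : ℝ :=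
  ∑ y : 𝓨, (∑ x : 𝓧, P x * W x y ^ (s / (s + ρ))) ^ (s + ρ) * (∑ x : 𝓧, Q x * W x y) ^ (1 - s)

/-- Single-letter quantity for the miss (collision miss-detection) event. -/
def Csum (W : 𝓧 → 𝓨 → ℝ) (P Q : 𝓧 → ℝ) (t : ℝ) : ℝ :=
  ∑ y : 𝓨, (∑ x : 𝓧, P x * W x y ^ (1 - t)) * (QWy W Q y) ^ t

lemma Asum_nonneg {W : 𝓧 → 𝓨 → ℝ} (hW : IsDMC W) {P Q : 𝓧 → ℝ} (hP : ∀ x, 0 ≤ P x)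
    (hQ : ∀ x, 0 ≤ Q x) (ρ s : ℝ) : 0 ≤ Asum W P Q ρ s :=
  Finset.sum_nonneg fun y _ => mul_nonneg
    (Finset.sum_nonneg fun x _ => mul_nonneg (hP x) (Real.rpow_nonneg (hW.1 x y) _))
    (Real.rpow_nonneg (Finset.sum_nonneg fun x _ =>
      mul_nonneg (hQ x) (Real.rpow_nonneg (hW.1 x y) _)) _)

lemma Bsum_nonneg {W : 𝓧 → 𝓨 → ℝ} (hW : IsDMC W) {P Q : 𝓧 → ℝ} (hP : ∀ x, 0 ≤ P x)
    (hQ : ∀ x, 0 ≤ Q x) (ρ s : ℝ) : 0 ≤ Bsum W P Q ρ s :=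
  Finset.sum_nonneg fun y _ => mul_nonneg
    (Real.rpow_nonneg (Finset.sum_nonneg fun x _ =>
      mul_nonneg (hP x) (Real.rpow_nonneg (hW.1 x y) _)) _)
    (Real.rpow_nonneg (Finset.sum_nonneg fun x _ => mul_nonneg (hQ x) (hW.1 x y)) _)

lemma Csum_nonneg {W : 𝓧 → 𝓨 → ℝ} (hW : IsDMC W) {P Q : 𝓧 → ℝ} (hP : ∀ x, 0 ≤ P x)
    (hQ : ∀ x, 0 ≤ Q x) (t : ℝ) : 0 ≤ Csum W P Q t :=
  Finset.sum_nonneg fun y _ => mul_nonneg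
    (Finset.sum_nonneg fun x _ => mul_nonneg (hP x) (Real.rpow_nonneg (hW.1 x y) _))
    (Real.rpow_nonneg (QWy_nonneg hW hQ y) _)

/-- Factorization of the tilted string sum. -/
lemma strWn_fact {W : 𝓧 → 𝓨 → ℝ} (hW : IsDMC W) (P : 𝓧 → ℝ) {N : ℕ} (y : Fin N → 𝓨) (e : ℝ) :
    ∑ z : Fin N → 𝓧, strP P z * Wn W z y ^ e = ∏ j, ∑ x : 𝓧, P x * W x (y j) ^ e := by
  have h1 : ∀ z : Fin N → 𝓧, strP P z * Wn W z y ^ e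
      = ∏ j, (P (z j) * W (z j) (y j) ^ e) := by
    intro z
    rw [Finset.prod_mul_distrib]
    congr 1
    unfold Wn
    rw [← Real.finset_prod_rpow _ _ (fun j _ => hW.1 _ _) e]
  rw [Finset.sum_congr rfl fun z _ => h1 z]
  exact sum_fn_prod (κ := fun _ : Fin N => 𝓧) (fun j x => P x * W x (y j) ^ e)

lemma ySum_fact {N : ℕ} (g : 𝓨 → ℝ) :
    ∑ y : Fin N → 𝓨, ∏ j, g (y j) = (∑ y' : 𝓨, g y') ^ N := by
  rw [sum_fn_prod (κ := fun _ : Fin N => 𝓨) (fun _ y => g y)]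
  simp

/-- Indicator of an existential is at most the `ρ`-th power of the sum of indicators. -/
lemma ind_exists_le_rpow {K : Type*} (S : Finset K) (Pk : K → Prop) (ρ : ℝ) (hρ : 0 < ρ) :
    (if ∃ k ∈ S, Pk k then (1:ℝ) else 0)
      ≤ (∑ k ∈ S, if Pk k then (1:ℝ) else 0) ^ ρ := by
  by_cases h : ∃ k ∈ S, Pk k
  · rw [if_pos h]
    obtain ⟨k0, hk0, hPk⟩ := h
    have h1 : (1:ℝ) ≤ ∑ k ∈ S, if Pk k then (1:ℝ) else 0 := by
      calc (1:ℝ) = if Pk k0 then (1:ℝ) else 0 := by rw [if_pos hPk]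
        _ ≤ _ := by
            refine Finset.single_le_sum (f := fun k => if Pk k then (1:ℝ) else 0)
              (fun k _ => ?_) hk0
            split <;> norm_num
    calc (1:ℝ) = (1:ℝ) ^ ρ := by rw [Real.one_rpow]
      _ ≤ _ := Real.rpow_le_rpow (by norm_num) h1 (le_of_lt hρ)
  · rw [if_neg h]
    exact Real.rpow_nonneg (Finset.sum_nonneg fun k _ => by split <;> norm_num) _

/-- Markov-type indicator bound: `1{τ ≤ L} ≤ τ^{-λ} L^λ` for `τ > 0`, `L ≥ 0`, `λ > 0`. -/
lemma ind_le_markov {τ L lam : ℝ} (hτ : 0 < τ) (hL : 0 ≤ L) (hlam : 0 < lam) :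
    (if τ ≤ L then (1:ℝ) else 0) ≤ τ ^ (-lam) * L ^ lam := by
  by_cases h : τ ≤ L
  · rw [if_pos h]
    have h1 : τ ^ lam ≤ L ^ lam := Real.rpow_le_rpow (le_of_lt hτ) h (le_of_lt hlam)
    calc (1:ℝ) = τ ^ (-lam) * τ ^ lam := by
          rw [← Real.rpow_add hτ, neg_add_cancel, Real.rpow_zero]
      _ ≤ τ ^ (-lam) * L ^ lam :=
          mul_le_mul_of_nonneg_left h1 (Real.rpow_nonneg (le_of_lt hτ) _)
  · rw [if_neg h]
    exact mul_nonneg (Real.rpow_nonneg (le_of_lt hτ) _) (Real.rpow_nonneg hL _)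

end RACletter

section RACbounds

variable {𝓧 𝓨 : Type*} [Fintype 𝓧] [Fintype 𝓨]
variable {W : 𝓧 → 𝓨 → ℝ} {M : ℕ} {rate : Fin M → ℝ} {Pd : Fin M → 𝓧 → ℝ}

set_option linter.unusedSectionVars false
set_option maxHeartbeats 1000000

/-- Marginalization of a function of the transmitted codeword. -/
lemma cw_tilt (hPd : ∀ i, IsDist (Pd i)) {N : ℕ} (p : Msg N rate) (F : (Fin N → 𝓧) → ℝ) :
    ∑ c : Cbk 𝓧 N rate, cbkProb rate Pd c * F (c p.1 p.2)
      = ∑ z : Fin N → 𝓧, strP (Pd p.1) z * F z := by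
  have h := tiltProd rate Pd (fun i => strP_sum_one (hPd i) N) {p} (fun _ z => F z)
  simpa using h

/-- Marginalization of a product of functions of two distinct codewords. -/
lemma cw_tilt2 (hPd : ∀ i, IsDist (Pd i)) {N : ℕ} (p q : Msg N rate) (hpq : p ≠ q)
    (F G : (Fin N → 𝓧) → ℝ) :
    ∑ c : Cbk 𝓧 N rate, cbkProb rate Pd c * (F (c p.1 p.2) * G (c q.1 q.2))
      = (∑ z : Fin N → 𝓧, strP (Pd p.1) z * F z) * (∑ z : Fin N → 𝓧, strP (Pd q.1) z * G z) := by
  have h := tiltProd rate Pd (fun i => strP_sum_one (hPd i) N) {p, q}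
    (fun r z => if r = p then F z else G z)
  simp only [Finset.prod_pair hpq] at h
  have e1 : ∀ z : Fin N → 𝓧, (if p = p then F z else G z) = F z := fun z => if_pos rfl
  have e2 : ∀ z : Fin N → 𝓧, (if q = p then F z else G z) = G z := fun z => if_neg (Ne.symm hpq)
  simp only [e1, e2] at h
  exact h

/-- Marginal output probability of the transmitted codeword. -/
lemma cw_marginal (hW : IsDMC W) (hPd : ∀ i, IsDist (Pd i)) {N : ℕ} (p : Msg N rate)
    (y : Fin N → 𝓨) :
    ∑ c : Cbk 𝓧 N rate, cbkProb rate Pd c * Wn W (c p.1 p.2) y = statY W (Pd p.1) y := by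
  rw [cw_tilt hPd p (fun z => Wn W z y)]
  have h := strWn_fact hW (Pd p.1) y 1
  simp only [Real.rpow_one] at h
  rw [h]
  unfold statY QWy
  rfl

/-- **Miss (collision miss-detection) bound.** -/
lemma miss_bound (hW : IsDMC W) (hPd : ∀ i, IsDist (Pd i)) {N : ℕ} (p : Msg N rate)
    (k : Fin M) (t γ : ℝ) (ht0 : 0 < t) (ht1 : t < 1) :
    prTx W rate Pd p (fun c y => Wn W (c p.1 p.2) y < Real.exp γ * statY W (Pd k) y)
      ≤ Real.exp (γ * t) * (Csum W (Pd p.1) (Pd k) t) ^ N := by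
  have hPnn : ∀ i x, 0 ≤ Pd i x := fun i x => (hPd i).1 x
  have step1 : prTx W rate Pd p (fun c y => Wn W (c p.1 p.2) y < Real.exp γ * statY W (Pd k) y)
      ≤ ∑ c : Cbk 𝓧 N rate, ∑ y : Fin N → 𝓨, cbkProb rate Pd c *
          (Wn W (c p.1 p.2) y ^ (1 - t) * (Real.exp γ * statY W (Pd k) y) ^ t) := by
    unfold prTx
    refine Finset.sum_le_sum fun c _ => Finset.sum_le_sum fun y _ => ?_
    rw [mul_assoc]
    refine mul_le_mul_of_nonneg_left ?_ (cbkProb_nonneg hPnn c)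
    -- pointwise : V * ind{V < τ} ≤ V^{1-t} * τ^t
    set V := Wn W (c p.1 p.2) y with hV
    set τ := Real.exp γ * statY W (Pd k) y with hτ
    have hVnn : 0 ≤ V := Wn_nonneg hW _ _
    have hτnn : 0 ≤ τ := mul_nonneg (le_of_lt (Real.exp_pos γ)) (statY_nonneg hW (hPnn k) y)
    by_cases h : V < τ
    · rw [if_pos h, mul_one]
      rcases eq_or_lt_of_le hVnn with h0 | h0
      · rw [← h0]
        exact mul_nonneg (Real.rpow_nonneg (le_refl 0) _) (Real.rpow_nonneg hτnn _)
      · calc V = V ^ (1 - t) * V ^ t := by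
              rw [← Real.rpow_add h0, sub_add_cancel, Real.rpow_one]
          _ ≤ V ^ (1 - t) * τ ^ t := mul_le_mul_of_nonneg_left
              (Real.rpow_le_rpow hVnn (le_of_lt h) (le_of_lt ht0))
              (Real.rpow_nonneg hVnn _)
    · rw [if_neg h, mul_zero]
      exact mul_nonneg (Real.rpow_nonneg hVnn _) (Real.rpow_nonneg hτnn _)
  refine le_trans step1 (le_of_eq ?_)
  calc ∑ c : Cbk 𝓧 N rate, ∑ y : Fin N → 𝓨, cbkProb rate Pd c *
        (Wn W (c p.1 p.2) y ^ (1 - t) * (Real.exp γ * statY W (Pd k) y) ^ t)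
      = ∑ y : Fin N → 𝓨, (Real.exp γ * statY W (Pd k) y) ^ t *
          ∑ c : Cbk 𝓧 N rate, cbkProb rate Pd c * Wn W (c p.1 p.2) y ^ (1 - t) := by
        rw [Finset.sum_comm]
        refine Finset.sum_congr rfl fun y _ => ?_
        rw [Finset.mul_sum]
        refine Finset.sum_congr rfl fun c _ => by ring
    _ = ∑ y : Fin N → 𝓨, (Real.exp γ * statY W (Pd k) y) ^ t *
          ∏ j, ∑ x : 𝓧, Pd p.1 x * W x (y j) ^ (1 - t) := by
        refine Finset.sum_congr rfl fun y _ => ?_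
        rw [cw_tilt hPd p (fun z => Wn W z y ^ (1 - t)), strWn_fact hW _ y (1 - t)]
    _ = ∑ y : Fin N → 𝓨, Real.exp (γ * t) *
          ∏ j, (QWy W (Pd k) (y j) ^ t * ∑ x : 𝓧, Pd p.1 x * W x (y j) ^ (1 - t)) := by
        refine Finset.sum_congr rfl fun y _ => ?_
        rw [Real.mul_rpow (le_of_lt (Real.exp_pos γ)) (statY_nonneg hW (hPnn k) y),
          ← Real.exp_mul]
        unfold statY
        rw [← Real.finset_prod_rpow _ _ (fun j _ => QWy_nonneg hW (hPnn k) _) t,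
          Finset.prod_mul_distrib]
        ring
    _ = Real.exp (γ * t) * (Csum W (Pd p.1) (Pd k) t) ^ N := by
        rw [← Finset.mul_sum]
        congr 1
        rw [ySum_fact (fun y' => QWy W (Pd k) y' ^ t * ∑ x : 𝓧, Pd p.1 x * W x y' ^ (1 - t))]
        unfold Csum
        congr 1
        exact Finset.sum_congr rfl fun y' _ => by ring

end RACbounds

section RACbounds2

variable {𝓧 𝓨 : Type*} [Fintype 𝓧] [Fintype 𝓨]
variable {W : 𝓧 → 𝓨 → ℝ} {M : ℕ} {rate : Fin M → ℝ} {Pd : Fin M → 𝓧 → ℝ}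

set_option linter.unusedSectionVars false
set_option maxHeartbeats 2000000

/-- **Confusion (Gallager) bound.** -/
lemma confusion_bound (hW : IsDMC W) (hPd : ∀ i, IsDist (Pd i)) {N : ℕ} (p : Msg N rate)
    (it : Fin M) (S : Finset (Msg N rate)) (hS1 : ∀ q ∈ S, q.1 = it) (hS2 : p ∉ S)
    (ρ s : ℝ) (hρ0 : 0 < ρ) (hρ1 : ρ ≤ 1) (hs0 : 0 < s) (hs1 : s ≤ 1) :
    prTx W rate Pd p (fun c y => ∃ q ∈ S, Wn W (c p.1 p.2) y ≤ Wn W (c q.1 q.2) y)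
      ≤ (S.card : ℝ) ^ ρ * (Asum W (Pd p.1) (Pd it) ρ s) ^ N := by
  classical
  have hPnn : ∀ i x, 0 ≤ Pd i x := fun i x => (hPd i).1 x
  set s' := s / ρ with hs'
  have hs'0 : 0 < s' := div_pos hs0 hρ0
  -- pointwise bound, with an abstract indicator value to dodge `Decidable` instances
  have ptwise : ∀ (c : Cbk 𝓧 N rate) (y : Fin N → 𝓨) (ind : ℝ), 0 ≤ ind → ind ≤ 1 →
      (ind ≠ 0 → ∃ q ∈ S, Wn W (c p.1 p.2) y ≤ Wn W (c q.1 q.2) y) →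
      cbkProb rate Pd c * Wn W (c p.1 p.2) y * ind
      ≤ cbkProb rate Pd c * (Wn W (c p.1 p.2) y ^ (1 - s) *
          (∑ q ∈ S, Wn W (c q.1 q.2) y ^ s') ^ ρ) := by
    intro c y ind hind0 hind1 hindE
    set V := Wn W (c p.1 p.2) y with hVdef
    have hVnn : 0 ≤ V := Wn_nonneg hW _ _
    have hΨnn : 0 ≤ ∑ q ∈ S, Wn W (c q.1 q.2) y ^ s' :=
      Finset.sum_nonneg fun q _ => Real.rpow_nonneg (Wn_nonneg hW _ _) _
    have hRHSnn : 0 ≤ V ^ (1 - s) * (∑ q ∈ S, Wn W (c q.1 q.2) y ^ s') ^ ρ :=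
      mul_nonneg (Real.rpow_nonneg hVnn _) (Real.rpow_nonneg hΨnn _)
    rcases eq_or_lt_of_le hVnn with hV0 | hV0
    · rw [mul_assoc]
      refine mul_le_mul_of_nonneg_left ?_ (cbkProb_nonneg hPnn c)
      have hz : V * ind = 0 := by rw [← hV0, zero_mul]
      rw [hz]
      exact hRHSnn
    · rw [mul_assoc]
      refine mul_le_mul_of_nonneg_left ?_ (cbkProb_nonneg hPnn c)
      have c2 : ∑ q ∈ S, (if V ≤ Wn W (c q.1 q.2) y then (1:ℝ) else 0)
          ≤ V ^ (-s') * ∑ q ∈ S, Wn W (c q.1 q.2) y ^ s' := by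
        rw [Finset.mul_sum]
        refine Finset.sum_le_sum fun q _ => ?_
        exact ind_le_markov hV0 (Wn_nonneg hW _ _) hs'0
      have c1 : ind ≤ (∑ q ∈ S, (if V ≤ Wn W (c q.1 q.2) y then (1:ℝ) else 0)) ^ ρ := by
        rcases eq_or_ne ind 0 with h0 | h0
        · rw [h0]
          exact Real.rpow_nonneg (Finset.sum_nonneg fun q _ => by split <;> norm_num) _
        · exact le_trans hind1 (ind_exists_le_rpow S (fun q => V ≤ Wn W (c q.1 q.2) y) ρ hρ0
            |>.trans_eq' (by rw [if_pos (hindE h0)]))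
      have c3 : (∑ q ∈ S, (if V ≤ Wn W (c q.1 q.2) y then (1:ℝ) else 0)) ^ ρ
          ≤ (V ^ (-s') * ∑ q ∈ S, Wn W (c q.1 q.2) y ^ s') ^ ρ :=
        Real.rpow_le_rpow (Finset.sum_nonneg fun q _ => by split <;> norm_num) c2
          (le_of_lt hρ0)
      have c4 : (V ^ (-s') * ∑ q ∈ S, Wn W (c q.1 q.2) y ^ s') ^ ρ
          = V ^ (-s) * (∑ q ∈ S, Wn W (c q.1 q.2) y ^ s') ^ ρ := by
        rw [Real.mul_rpow (Real.rpow_nonneg (le_of_lt hV0) _) hΨnn,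
          ← Real.rpow_mul (le_of_lt hV0)]
        congr 2
        rw [hs']
        field_simp
      calc V * ind
          ≤ V * (V ^ (-s) * (∑ q ∈ S, Wn W (c q.1 q.2) y ^ s') ^ ρ) := by
            refine mul_le_mul_of_nonneg_left ?_ (le_of_lt hV0)
            rw [← c4]
            exact le_trans c1 c3
        _ = V ^ (1 - s) * (∑ q ∈ S, Wn W (c q.1 q.2) y ^ s') ^ ρ := by
            rw [← mul_assoc]
            congr 1
            rw [sub_eq_add_neg, Real.rpow_add hV0, Real.rpow_one]
  -- per-y quantities
  set Vb : (Fin N → 𝓨) → ℝ := fun y => ∑ z : Fin N → 𝓧, strP (Pd p.1) z * Wn W z y ^ (1 - s)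
    with hVb
  set Kb : (Fin N → 𝓨) → ℝ := fun y => ∑ z : Fin N → 𝓧, strP (Pd it) z * Wn W z y ^ s'
    with hKb
  have hVbnn : ∀ y, 0 ≤ Vb y := fun y => Finset.sum_nonneg fun z _ =>
    mul_nonneg (strP_nonneg (hPnn p.1) z) (Real.rpow_nonneg (Wn_nonneg hW _ _) _)
  have hKbnn : ∀ y, 0 ≤ Kb y := fun y => Finset.sum_nonneg fun z _ =>
    mul_nonneg (strP_nonneg (hPnn it) z) (Real.rpow_nonneg (Wn_nonneg hW _ _) _)
  -- per-y bound on the codebook sum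
  have peryB : ∀ y : Fin N → 𝓨,
      ∑ c : Cbk 𝓧 N rate, cbkProb rate Pd c * (Wn W (c p.1 p.2) y ^ (1 - s) *
          (∑ q ∈ S, Wn W (c q.1 q.2) y ^ s') ^ ρ)
      ≤ (S.card : ℝ) ^ ρ * (Vb y * Kb y ^ ρ) := by
    intro y
    have e0 : ∑ c : Cbk 𝓧 N rate, cbkProb rate Pd c * (Wn W (c p.1 p.2) y ^ (1 - s) *
          (∑ q ∈ S, Wn W (c q.1 q.2) y ^ s') ^ ρ)
        = ∑ c : Cbk 𝓧 N rate, (cbkProb rate Pd c * Wn W (c p.1 p.2) y ^ (1 - s)) *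
          (∑ q ∈ S, Wn W (c q.1 q.2) y ^ s') ^ ρ :=
      Finset.sum_congr rfl fun c _ => by ring
    rw [e0]
    have jensen : ∑ c : Cbk 𝓧 N rate, (cbkProb rate Pd c * Wn W (c p.1 p.2) y ^ (1 - s)) *
        (∑ q ∈ S, Wn W (c q.1 q.2) y ^ s') ^ ρ
        ≤ (∑ c : Cbk 𝓧 N rate, cbkProb rate Pd c * Wn W (c p.1 p.2) y ^ (1 - s)) ^ (1 - ρ) *
          (∑ c : Cbk 𝓧 N rate, (cbkProb rate Pd c * Wn W (c p.1 p.2) y ^ (1 - s)) *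
            (∑ q ∈ S, Wn W (c q.1 q.2) y ^ s')) ^ ρ :=
      sum_mul_rpow_le (Finset.univ : Finset (Cbk 𝓧 N rate))
        (fun c => cbkProb rate Pd c * Wn W (c p.1 p.2) y ^ (1 - s))
        (fun c => ∑ q ∈ S, Wn W (c q.1 q.2) y ^ s') ρ hρ0 hρ1
        (fun c _ => mul_nonneg (cbkProb_nonneg hPnn c)
          (Real.rpow_nonneg (Wn_nonneg hW _ _) _))
        (fun c _ => Finset.sum_nonneg fun q _ => Real.rpow_nonneg (Wn_nonneg hW _ _) _)
    have hw1 : ∑ c : Cbk 𝓧 N rate, cbkProb rate Pd c * Wn W (c p.1 p.2) y ^ (1 - s)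
        = Vb y := cw_tilt hPd p (fun z => Wn W z y ^ (1 - s))
    have hw2 : ∑ c : Cbk 𝓧 N rate, (cbkProb rate Pd c * Wn W (c p.1 p.2) y ^ (1 - s)) *
        (∑ q ∈ S, Wn W (c q.1 q.2) y ^ s') = (S.card : ℝ) * (Vb y * Kb y) := by
      have swap : ∑ c : Cbk 𝓧 N rate, (cbkProb rate Pd c * Wn W (c p.1 p.2) y ^ (1 - s)) *
          (∑ q ∈ S, Wn W (c q.1 q.2) y ^ s')
          = ∑ q ∈ S, ∑ c : Cbk 𝓧 N rate, cbkProb rate Pd c *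
            (Wn W (c p.1 p.2) y ^ (1 - s) * Wn W (c q.1 q.2) y ^ s') := by
        rw [Finset.sum_comm]
        refine Finset.sum_congr rfl fun c _ => ?_
        rw [Finset.mul_sum]
        refine Finset.sum_congr rfl fun q _ => by ring
      rw [swap]
      have perq : ∀ q ∈ S, ∑ c : Cbk 𝓧 N rate, cbkProb rate Pd c *
          (Wn W (c p.1 p.2) y ^ (1 - s) * Wn W (c q.1 q.2) y ^ s') = Vb y * Kb y := by
        intro q hq
        have hpq : p ≠ q := fun h => hS2 (h ▸ hq)
        rw [cw_tilt2 hPd p q hpq (fun z => Wn W z y ^ (1 - s)) (fun z => Wn W z y ^ s')]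
        rw [hS1 q hq]
      rw [Finset.sum_congr rfl perq, Finset.sum_const, nsmul_eq_mul]
    rw [hw1, hw2] at jensen
    refine le_trans jensen ?_
    -- (Vb)^{1-ρ} * (card * (Vb*Kb))^ρ ≤ card^ρ * (Vb * Kb^ρ)
    have hcnn : (0:ℝ) ≤ (S.card : ℝ) := Nat.cast_nonneg _
    rcases eq_or_lt_of_le (hVbnn y) with h0 | h0
    · rw [← h0, zero_mul, mul_zero, Real.zero_rpow (ne_of_gt hρ0), mul_zero, zero_mul,
        mul_zero]
    · refine le_of_eq ?_
      rw [Real.mul_rpow hcnn (mul_nonneg (le_of_lt h0) (hKbnn y)),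
        Real.mul_rpow (le_of_lt h0) (hKbnn y)]
      have : Vb y ^ (1 - ρ) * ((S.card : ℝ) ^ ρ * (Vb y ^ ρ * Kb y ^ ρ))
          = (S.card : ℝ) ^ ρ * ((Vb y ^ (1 - ρ) * Vb y ^ ρ) * Kb y ^ ρ) := by ring
      rw [this, ← Real.rpow_add h0, sub_add_cancel, Real.rpow_one]
  -- put everything together
  calc prTx W rate Pd p (fun c y => ∃ q ∈ S, Wn W (c p.1 p.2) y ≤ Wn W (c q.1 q.2) y)
      ≤ ∑ y : Fin N → 𝓨, ∑ c : Cbk 𝓧 N rate, cbkProb rate Pd c *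
          (Wn W (c p.1 p.2) y ^ (1 - s) * (∑ q ∈ S, Wn W (c q.1 q.2) y ^ s') ^ ρ) := by
        unfold prTx
        rw [Finset.sum_comm]
        refine Finset.sum_le_sum fun y _ => Finset.sum_le_sum fun c _ => ?_
        refine ptwise c y _ ?_ ?_ ?_
        · split <;> norm_num
        · split <;> norm_num
        · intro h0
          by_contra hne
          exact h0 (if_neg hne)
    _ ≤ ∑ y : Fin N → 𝓨, (S.card : ℝ) ^ ρ * (Vb y * Kb y ^ ρ) :=
        Finset.sum_le_sum fun y _ => peryB y
    _ = (S.card : ℝ) ^ ρ * ∑ y : Fin N → 𝓨, Vb y * Kb y ^ ρ := by rw [← Finset.mul_sum]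
    _ = (S.card : ℝ) ^ ρ * (Asum W (Pd p.1) (Pd it) ρ s) ^ N := by
        congr 1
        have hfact : ∀ y : Fin N → 𝓨, Vb y * Kb y ^ ρ
            = ∏ j, ((∑ x : 𝓧, Pd p.1 x * W x (y j) ^ (1 - s)) *
                (∑ x : 𝓧, Pd it x * W x (y j) ^ s') ^ ρ) := by
          intro y
          rw [hVb, hKb]
          simp only []
          rw [strWn_fact hW _ y (1 - s), strWn_fact hW _ y s',
            ← Real.finset_prod_rpow _ _ (fun j _ => Finset.sum_nonneg fun x _ =>
              mul_nonneg (hPnn it x) (Real.rpow_nonneg (hW.1 x _) _)) ρ,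
            Finset.prod_mul_distrib]
        rw [Finset.sum_congr rfl fun y _ => hfact y,
          ySum_fact (fun y' => (∑ x : 𝓧, Pd p.1 x * W x y' ^ (1 - s)) *
            (∑ x : 𝓧, Pd it x * W x y' ^ s') ^ ρ)]
        rfl

end RACbounds2

section RACbounds3

variable {𝓧 𝓨 : Type*} [Fintype 𝓧] [Fintype 𝓨]
variable {W : 𝓧 → 𝓨 → ℝ} {M : ℕ} {rate : Fin M → ℝ} {Pd : Fin M → 𝓧 → ℝ}

set_option linter.unusedSectionVars false
set_option maxHeartbeats 2000000

lemma strWn_one {P : 𝓧 → ℝ} (hW : IsDMC W) {N : ℕ} (y : Fin N → 𝓨) :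
    ∑ z : Fin N → 𝓧, strP P z * Wn W z y = statY W P y := by
  have h := strWn_fact hW P y 1
  simp only [Real.rpow_one] at h
  rw [h]
  rfl

/-- **False-alarm bound.** -/
lemma fa_bound (hW : IsDMC W) (hPd : ∀ i, IsDist (Pd i)) {N : ℕ} (p : Msg N rate) (i : Fin M)
    (hpi : p.1 ≠ i) (ρ s : ℝ) (hρ0 : 0 < ρ) (hρ1 : ρ < 1) (hs0 : 0 < s) (hs1 : s ≤ 1 - ρ)
    (hri : 0 ≤ rate i) :
    prTx W rate Pd p (fun c y => ∃ w : Fin (numMsg N rate i),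
        Real.exp ((N:ℝ) * rate i) * statY W (Pd p.1) y ≤ Wn W (c i w) y)
      ≤ Real.exp (ρ * ((N:ℝ) * rate i)) * (Bsum W (Pd i) (Pd p.1) ρ s) ^ N := by
  classical
  have hPnn : ∀ i' x, 0 ≤ Pd i' x := fun i' x => (hPd i').1 x
  set γ := (N:ℝ) * rate i with hγ
  have hγnn : 0 ≤ γ := mul_nonneg (Nat.cast_nonneg N) hri
  set u := s + ρ with hu
  have hu0 : 0 < u := by positivity
  have hu1 : u ≤ 1 := by rw [hu]; linarith
  set lam := s / u with hlam
  have hlam0 : 0 < lam := div_pos hs0 hu0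
  have hlamu : lam * u = s := div_mul_cancel₀ s (ne_of_gt hu0)
  set Kb' : (Fin N → 𝓨) → ℝ := fun y => ∑ z : Fin N → 𝓧, strP (Pd i) z * Wn W z y ^ lam
    with hKb'
  have hKb'nn : ∀ y, 0 ≤ Kb' y := fun y => Finset.sum_nonneg fun z _ =>
    mul_nonneg (strP_nonneg (hPnn i) z) (Real.rpow_nonneg (Wn_nonneg hW _ _) _)
  have hs1' : s < 1 := by linarith
  -- numMsg ≤ e^γ
  have hM : ((numMsg N rate i : ℕ) : ℝ) ≤ Real.exp γ := by
    unfold numMsg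
    exact Nat.floor_le (le_of_lt (Real.exp_pos _))
  -- per-y bound
  have pery : ∀ (y : Fin N → 𝓨) (ind : Cbk 𝓧 N rate → ℝ), (∀ c, 0 ≤ ind c) →
      (∀ c, ind c ≤ 1) →
      (∀ c, ind c ≠ 0 → ∃ w : Fin (numMsg N rate i),
          Real.exp γ * statY W (Pd p.1) y ≤ Wn W (c i w) y) →
      ∑ c : Cbk 𝓧 N rate, cbkProb rate Pd c * Wn W (c p.1 p.2) y * ind c
      ≤ Real.exp (ρ * γ) * (statY W (Pd p.1) y ^ (1 - s) * Kb' y ^ u) := by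
    intro y ind hind0 hind1 hindE
    have hstatnn : 0 ≤ statY W (Pd p.1) y := statY_nonneg hW (hPnn p.1) y
    rcases eq_or_lt_of_le hstatnn with hst0 | hst0
    · -- statY = 0 : left side vanishes
      have hle : ∑ c : Cbk 𝓧 N rate, cbkProb rate Pd c * Wn W (c p.1 p.2) y * ind c
          ≤ ∑ c : Cbk 𝓧 N rate, cbkProb rate Pd c * Wn W (c p.1 p.2) y := by
        refine Finset.sum_le_sum fun c _ => ?_
        have h1 : (0:ℝ) ≤ cbkProb rate Pd c * Wn W (c p.1 p.2) y :=
          mul_nonneg (cbkProb_nonneg hPnn c) (Wn_nonneg hW _ _)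
        calc cbkProb rate Pd c * Wn W (c p.1 p.2) y * ind c
            ≤ cbkProb rate Pd c * Wn W (c p.1 p.2) y * 1 :=
              mul_le_mul_of_nonneg_left (hind1 c) h1
          _ = cbkProb rate Pd c * Wn W (c p.1 p.2) y := mul_one _
      refine le_trans hle ?_
      rw [cw_marginal hW hPd p y]
      refine le_of_eq ?_
      rw [← hst0, Real.zero_rpow (by linarith : (1:ℝ) - s ≠ 0), zero_mul, mul_zero]
    · -- statY > 0
      set τ := Real.exp γ * statY W (Pd p.1) y with hτ
      have hτ0 : 0 < τ := mul_pos (Real.exp_pos _) hst0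
      have step1 : ∑ c : Cbk 𝓧 N rate, cbkProb rate Pd c * Wn W (c p.1 p.2) y * ind c
          ≤ τ ^ (-s) * ∑ c : Cbk 𝓧 N rate, (cbkProb rate Pd c * Wn W (c p.1 p.2) y) *
            (∑ w : Fin (numMsg N rate i), Wn W (c i w) y ^ lam) ^ u := by
        rw [Finset.mul_sum]
        refine Finset.sum_le_sum fun c _ => ?_
        have h1 : (0:ℝ) ≤ cbkProb rate Pd c * Wn W (c p.1 p.2) y :=
          mul_nonneg (cbkProb_nonneg hPnn c) (Wn_nonneg hW _ _)
        have hΨnn : 0 ≤ ∑ w : Fin (numMsg N rate i), Wn W (c i w) y ^ lam :=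
          Finset.sum_nonneg fun w _ => Real.rpow_nonneg (Wn_nonneg hW _ _) _
        have c1 : ind c ≤ (∑ w : Fin (numMsg N rate i),
                (if τ ≤ Wn W (c i w) y then (1:ℝ) else 0)) ^ u := by
          rcases eq_or_ne (ind c) 0 with h0 | h0
          · rw [h0]
            exact Real.rpow_nonneg
              (Finset.sum_nonneg fun w _ => by split <;> norm_num) _
          · obtain ⟨w0, hw0⟩ := hindE c h0
            have hex : ∃ w ∈ (Finset.univ : Finset (Fin (numMsg N rate i))),
                τ ≤ Wn W (c i w) y := ⟨w0, Finset.mem_univ _, hw0⟩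
            have := ind_exists_le_rpow (Finset.univ : Finset (Fin (numMsg N rate i)))
              (fun w => τ ≤ Wn W (c i w) y) u hu0
            rw [if_pos hex] at this
            exact le_trans (hind1 c) this
        have c2 : ∑ w : Fin (numMsg N rate i), (if τ ≤ Wn W (c i w) y then (1:ℝ) else 0)
            ≤ τ ^ (-lam) * ∑ w : Fin (numMsg N rate i), Wn W (c i w) y ^ lam := by
          rw [Finset.mul_sum]
          exact Finset.sum_le_sum fun w _ =>
            ind_le_markov hτ0 (Wn_nonneg hW _ _) hlam0
        have c3 : (∑ w : Fin (numMsg N rate i), (if τ ≤ Wn W (c i w) y then (1:ℝ) else 0)) ^ u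
            ≤ τ ^ (-s) * (∑ w : Fin (numMsg N rate i), Wn W (c i w) y ^ lam) ^ u := by
          calc (∑ w : Fin (numMsg N rate i), (if τ ≤ Wn W (c i w) y then (1:ℝ) else 0)) ^ u
              ≤ (τ ^ (-lam) * ∑ w : Fin (numMsg N rate i), Wn W (c i w) y ^ lam) ^ u :=
                Real.rpow_le_rpow
                  (Finset.sum_nonneg fun w _ => by split <;> norm_num) c2 (le_of_lt hu0)
            _ = τ ^ (-s) * (∑ w : Fin (numMsg N rate i), Wn W (c i w) y ^ lam) ^ u := by
                rw [Real.mul_rpow (Real.rpow_nonneg (le_of_lt hτ0) _) hΨnn,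
                  ← Real.rpow_mul (le_of_lt hτ0)]
                congr 2
                rw [neg_mul, hlamu]
        calc cbkProb rate Pd c * Wn W (c p.1 p.2) y * ind c
            ≤ cbkProb rate Pd c * Wn W (c p.1 p.2) y *
              (τ ^ (-s) * (∑ w : Fin (numMsg N rate i), Wn W (c i w) y ^ lam) ^ u) :=
              mul_le_mul_of_nonneg_left (le_trans c1 c3) h1
          _ = τ ^ (-s) * ((cbkProb rate Pd c * Wn W (c p.1 p.2) y) *
              (∑ w : Fin (numMsg N rate i), Wn W (c i w) y ^ lam) ^ u) := by ring
      -- Jensen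
      have jensen : ∑ c : Cbk 𝓧 N rate, (cbkProb rate Pd c * Wn W (c p.1 p.2) y) *
          (∑ w : Fin (numMsg N rate i), Wn W (c i w) y ^ lam) ^ u
          ≤ (∑ c : Cbk 𝓧 N rate, cbkProb rate Pd c * Wn W (c p.1 p.2) y) ^ (1 - u) *
            (∑ c : Cbk 𝓧 N rate, (cbkProb rate Pd c * Wn W (c p.1 p.2) y) *
              (∑ w : Fin (numMsg N rate i), Wn W (c i w) y ^ lam)) ^ u :=
        sum_mul_rpow_le (Finset.univ : Finset (Cbk 𝓧 N rate))
          (fun c => cbkProb rate Pd c * Wn W (c p.1 p.2) y)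
          (fun c => ∑ w : Fin (numMsg N rate i), Wn W (c i w) y ^ lam) u hu0 hu1
          (fun c _ => mul_nonneg (cbkProb_nonneg hPnn c) (Wn_nonneg hW _ _))
          (fun c _ => Finset.sum_nonneg fun w _ => Real.rpow_nonneg (Wn_nonneg hW _ _) _)
      have hw1 : ∑ c : Cbk 𝓧 N rate, cbkProb rate Pd c * Wn W (c p.1 p.2) y
          = statY W (Pd p.1) y := cw_marginal hW hPd p y
      have hw2 : ∑ c : Cbk 𝓧 N rate, (cbkProb rate Pd c * Wn W (c p.1 p.2) y) *
          (∑ w : Fin (numMsg N rate i), Wn W (c i w) y ^ lam)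
          = ((numMsg N rate i : ℕ) : ℝ) * (statY W (Pd p.1) y * Kb' y) := by
        have swap : ∑ c : Cbk 𝓧 N rate, (cbkProb rate Pd c * Wn W (c p.1 p.2) y) *
            (∑ w : Fin (numMsg N rate i), Wn W (c i w) y ^ lam)
            = ∑ w : Fin (numMsg N rate i), ∑ c : Cbk 𝓧 N rate, cbkProb rate Pd c *
              (Wn W (c p.1 p.2) y * Wn W (c i w) y ^ lam) := by
          rw [Finset.sum_comm]
          refine Finset.sum_congr rfl fun c _ => ?_
          rw [Finset.mul_sum]
          exact Finset.sum_congr rfl fun w _ => by ring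
        rw [swap]
        have perw : ∀ w : Fin (numMsg N rate i), ∑ c : Cbk 𝓧 N rate, cbkProb rate Pd c *
            (Wn W (c p.1 p.2) y * Wn W (c i w) y ^ lam)
            = statY W (Pd p.1) y * Kb' y := by
          intro w
          have hpq : p ≠ (⟨i, w⟩ : Msg N rate) := by
            intro h
            exact hpi (congrArg Sigma.fst h)
          rw [cw_tilt2 hPd p ⟨i, w⟩ hpq (fun z => Wn W z y) (fun z => Wn W z y ^ lam)]
          rw [strWn_one hW]
        rw [Finset.sum_congr rfl fun w _ => perw w, Finset.sum_const, Finset.card_univ,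
          Fintype.card_fin, nsmul_eq_mul]
      rw [hw1, hw2] at jensen
      have final : τ ^ (-s) * (statY W (Pd p.1) y ^ (1 - u) *
          (((numMsg N rate i : ℕ) : ℝ) * (statY W (Pd p.1) y * Kb' y)) ^ u)
          ≤ Real.exp (ρ * γ) * (statY W (Pd p.1) y ^ (1 - s) * Kb' y ^ u) := by
        have hMnn : (0:ℝ) ≤ ((numMsg N rate i : ℕ) : ℝ) := Nat.cast_nonneg _
        rw [Real.mul_rpow hMnn (mul_nonneg (le_of_lt hst0) (hKb'nn y)),
          Real.mul_rpow (le_of_lt hst0) (hKb'nn y)]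
        rw [hτ, Real.mul_rpow (le_of_lt (Real.exp_pos _)) (le_of_lt hst0)]
        rw [← Real.exp_mul]
        -- now : exp(γ·(-s)) * statY^(-s) * (statY^(1-u) * (M^u * (statY^u * Kb'^u)))
        have hcomb : Real.exp (γ * (-s)) * statY W (Pd p.1) y ^ (-s) *
            (statY W (Pd p.1) y ^ (1 - u) * (((numMsg N rate i : ℕ) : ℝ) ^ u *
              (statY W (Pd p.1) y ^ u * Kb' y ^ u)))
            = (((numMsg N rate i : ℕ) : ℝ) ^ u * Real.exp (γ * (-s))) *
              ((statY W (Pd p.1) y ^ (-s) * statY W (Pd p.1) y ^ (1 - u) *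
                statY W (Pd p.1) y ^ u) * Kb' y ^ u) := by ring
        rw [hcomb]
        have hstat3 : statY W (Pd p.1) y ^ (-s) * statY W (Pd p.1) y ^ (1 - u) *
            statY W (Pd p.1) y ^ u = statY W (Pd p.1) y ^ (1 - s) := by
          rw [← Real.rpow_add hst0, ← Real.rpow_add hst0]
          congr 1
          ring
        rw [hstat3]
        refine mul_le_mul_of_nonneg_right ?_
          (mul_nonneg (Real.rpow_nonneg (le_of_lt hst0) _) (Real.rpow_nonneg (hKb'nn y) _))
        have h1 : (((numMsg N rate i : ℕ) : ℝ)) ^ u ≤ (Real.exp γ) ^ u :=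
          Real.rpow_le_rpow hMnn hM (le_of_lt hu0)
        calc (((numMsg N rate i : ℕ) : ℝ)) ^ u * Real.exp (γ * (-s))
            ≤ (Real.exp γ) ^ u * Real.exp (γ * (-s)) :=
              mul_le_mul_of_nonneg_right h1 (le_of_lt (Real.exp_pos _))
          _ = Real.exp (ρ * γ) := by
              rw [← Real.exp_mul, ← Real.exp_add]
              congr 1
              rw [hu]
              ring
      calc ∑ c : Cbk 𝓧 N rate, cbkProb rate Pd c * Wn W (c p.1 p.2) y * ind c
          ≤ τ ^ (-s) * ∑ c : Cbk 𝓧 N rate, (cbkProb rate Pd c * Wn W (c p.1 p.2) y) *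
            (∑ w : Fin (numMsg N rate i), Wn W (c i w) y ^ lam) ^ u := step1
        _ ≤ τ ^ (-s) * (statY W (Pd p.1) y ^ (1 - u) *
            (((numMsg N rate i : ℕ) : ℝ) * (statY W (Pd p.1) y * Kb' y)) ^ u) := by
            refine mul_le_mul_of_nonneg_left ?_ (Real.rpow_nonneg (le_of_lt hτ0) _)
            exact jensen
        _ ≤ Real.exp (ρ * γ) * (statY W (Pd p.1) y ^ (1 - s) * Kb' y ^ u) := final
  -- assemble over y
  calc prTx W rate Pd p (fun c y => ∃ w : Fin (numMsg N rate i),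
        Real.exp ((N:ℝ) * rate i) * statY W (Pd p.1) y ≤ Wn W (c i w) y)
      ≤ ∑ y : Fin N → 𝓨, Real.exp (ρ * γ) *
          (statY W (Pd p.1) y ^ (1 - s) * Kb' y ^ u) := by
        unfold prTx
        rw [Finset.sum_comm]
        refine Finset.sum_le_sum fun y _ => ?_
        refine pery y _ (fun c => ?_) (fun c => ?_) (fun c hc => ?_)
        · split <;> norm_num
        · split <;> norm_num
        · by_contra hne
          exact hc (if_neg hne)
    _ = Real.exp (ρ * γ) * ∑ y : Fin N → 𝓨, statY W (Pd p.1) y ^ (1 - s) * Kb' y ^ u := by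
        rw [← Finset.mul_sum]
    _ = Real.exp (ρ * ((N:ℝ) * rate i)) * (Bsum W (Pd i) (Pd p.1) ρ s) ^ N := by
        congr 1
        have hfact : ∀ y : Fin N → 𝓨, statY W (Pd p.1) y ^ (1 - s) * Kb' y ^ u
            = ∏ j, ((∑ x : 𝓧, Pd i x * W x (y j) ^ lam) ^ u *
                QWy W (Pd p.1) (y j) ^ (1 - s)) := by
          intro y
          rw [hKb']
          simp only []
          rw [strWn_fact hW _ y lam]
          unfold statY
          rw [← Real.finset_prod_rpow _ _ (fun j _ => QWy_nonneg hW (hPnn p.1) _) (1 - s),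
            ← Real.finset_prod_rpow _ _ (fun j _ => Finset.sum_nonneg fun x _ =>
              mul_nonneg (hPnn i x) (Real.rpow_nonneg (hW.1 x _) _)) u,
            ← Finset.prod_mul_distrib]
          exact Finset.prod_congr rfl fun j _ => by ring
        rw [Finset.sum_congr rfl fun y _ => hfact y,
          ySum_fact (fun y' => (∑ x : 𝓧, Pd i x * W x y' ^ lam) ^ u *
            QWy W (Pd p.1) y' ^ (1 - s))]
        unfold Bsum QWy
        rw [hlam, hu]

end RACbounds3

section RACdecoder

variable {𝓧 𝓨 : Type*} [Fintype 𝓧] [Fintype 𝓨]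

set_option linter.unusedSectionVars false
set_option maxHeartbeats 1000000

variable (W : 𝓧 → 𝓨 → ℝ) {M : ℕ} (rate : Fin M → ℝ) (Pd : Fin M → 𝓧 → ℝ) (R : Finset (Fin M))

/-- The threshold test for collision detection. -/
def passes {N : ℕ} (c : Cbk 𝓧 N rate) (y : Fin N → 𝓨) (q : Msg N rate) : Prop :=
  ∀ k ∈ Finset.univ \ R, Real.exp ((N:ℝ) * rate q.1) * statY W (Pd k) y ≤ Wn W (c q.1 q.2) y

/-- Candidate message-rate pairs. -/
def cand {N : ℕ} (c : Cbk 𝓧 N rate) (y : Fin N → 𝓨) : Finset (Msg N rate) :=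
  Finset.univ.filter (fun q => q.1 ∈ R ∧ passes W rate Pd R c y q)

/-- The threshold-ML decoder. -/
noncomputable def decoder (N : ℕ) (c : Cbk 𝓧 N rate) (y : Fin N → 𝓨) : Option (Msg N rate) :=
  if h : (cand W rate Pd R c y).Nonempty then
    some (Finset.exists_max_image (cand W rate Pd R c y)
      (fun q => Wn W (c q.1 q.2) y) h).choose
  else none

lemma decoder_mem {N : ℕ} (c : Cbk 𝓧 N rate) (y : Fin N → 𝓨) (p : Msg N rate)
    (h : decoder W rate Pd R N c y = some p) : p.1 ∈ R := by
  unfold decoder at h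
  split at h
  case isTrue hne =>
    have hspec := (Finset.exists_max_image (cand W rate Pd R c y)
      (fun q => Wn W (c q.1 q.2) y) hne).choose_spec
    have hmem := hspec.1
    have : p = (Finset.exists_max_image (cand W rate Pd R c y)
        (fun q => Wn W (c q.1 q.2) y) hne).choose := by
      exact (Option.some_injective _ h).symm
    rw [this]
    exact (Finset.mem_filter.1 hmem).2.1
  case isFalse => exact absurd h (by simp)

lemma decoder_err {N : ℕ} (c : Cbk 𝓧 N rate) (y : Fin N → 𝓨) (p : Msg N rate)
    (hp : p.1 ∈ R) (h : decoder W rate Pd R N c y ≠ some p) :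
    (¬ passes W rate Pd R c y p) ∨
      (∃ q : Msg N rate, q.1 ∈ R ∧ q ≠ p ∧ Wn W (c p.1 p.2) y ≤ Wn W (c q.1 q.2) y) := by
  by_cases hpass : passes W rate Pd R c y p
  · right
    have hpc : p ∈ cand W rate Pd R c y := Finset.mem_filter.2 ⟨Finset.mem_univ _, hp, hpass⟩
    have hne : (cand W rate Pd R c y).Nonempty := ⟨p, hpc⟩
    set q0 := (Finset.exists_max_image (cand W rate Pd R c y)
      (fun q => Wn W (c q.1 q.2) y) hne).choose with hq0
    have hspec := (Finset.exists_max_image (cand W rate Pd R c y)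
      (fun q => Wn W (c q.1 q.2) y) hne).choose_spec
    have hd : decoder W rate Pd R N c y = some q0 := by
      unfold decoder
      rw [dif_pos hne]
    have hq0p : q0 ≠ p := by
      intro he
      exact h (by rw [hd, he])
    refine ⟨q0, (Finset.mem_filter.1 hspec.1).2.1, hq0p, ?_⟩
    exact hspec.2 p hpc
  · left; exact hpass

lemma decoder_some {N : ℕ} (c : Cbk 𝓧 N rate) (y : Fin N → 𝓨)
    (h : decoder W rate Pd R N c y ≠ none) :
    ∃ q : Msg N rate, q.1 ∈ R ∧ passes W rate Pd R c y q := by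
  unfold decoder at h
  split at h
  case isTrue hne =>
    obtain ⟨q, hq⟩ := hne
    exact ⟨q, (Finset.mem_filter.1 hq).2.1, (Finset.mem_filter.1 hq).2.2⟩
  case isFalse => exact absurd rfl h

end RACdecoder

section RACwitness

variable {𝓧 𝓨 : Type*} [Fintype 𝓧] [Fintype 𝓨]

set_option linter.unusedSectionVars false
set_option maxHeartbeats 1000000

lemma em_witness {W : 𝓧 → 𝓨 → ℝ} (hW : IsDMC W) {P Q : 𝓧 → ℝ} (hP : ∀ x, 0 ≤ P x)
    (hQ : ∀ x, 0 ≤ Q x) {rt a : ℝ} (hrt : 0 ≤ rt) (ha : 0 < a) (h : a < Em W rt P Q) :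
    ∃ ρ ∈ Set.Ioc (0:ℝ) 1, ∃ s ∈ Set.Ioc (0:ℝ) 1,
      Asum W P Q ρ s < Real.exp (-(a + ρ * rt)) := by
  unfold Em at h
  obtain ⟨v, hv, hav⟩ := exists_lt_of_lt_csSup
    (Set.Nonempty.image _ ⟨1, by norm_num⟩) h
  obtain ⟨ρ, hρ, rfl⟩ := hv
  refine ⟨ρ, hρ, ?_⟩
  have h2 : a + ρ * rt < sSup ((fun s => -Real.log (∑ y : 𝓨,
      (∑ x : 𝓧, P x * W x y ^ (1 - s)) * (∑ x : 𝓧, Q x * W x y ^ (s / ρ)) ^ ρ))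
        '' Set.Ioc (0:ℝ) 1) := by linarith
  obtain ⟨v', hv', hav'⟩ := exists_lt_of_lt_csSup
    (Set.Nonempty.image _ ⟨1, by norm_num⟩) h2
  obtain ⟨s, hs, rfl⟩ := hv'
  refine ⟨s, hs, ?_⟩
  have hAnn : 0 ≤ Asum W P Q ρ s := Asum_nonneg hW hP hQ ρ s
  rcases eq_or_lt_of_le hAnn with h0 | h0
  · rw [← h0]; exact Real.exp_pos _
  · have hlog : Real.log (Asum W P Q ρ s) < -(a + ρ * rt) := by
      have : a + ρ * rt < -Real.log (Asum W P Q ρ s) := hav'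
      linarith
    calc Asum W P Q ρ s = Real.exp (Real.log (Asum W P Q ρ s)) := (Real.exp_log h0).symm
      _ < Real.exp (-(a + ρ * rt)) := Real.exp_lt_exp.2 hlog

lemma ei_witness {W : 𝓧 → 𝓨 → ℝ} (hW : IsDMC W) {P Q : 𝓧 → ℝ} (hP : ∀ x, 0 ≤ P x)
    (hQ : ∀ x, 0 ≤ Q x) {r a : ℝ} (hr : 0 ≤ r) (ha : 0 < a) (h : a < Ei W r P Q) :
    ∃ ρ ∈ Set.Ioo (0:ℝ) 1, ∃ s ∈ Set.Ioc (0:ℝ) (1 - ρ),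
      Bsum W P Q ρ s < Real.exp (-(a + ρ * r)) := by
  unfold Ei at h
  obtain ⟨v, hv, hav⟩ := exists_lt_of_lt_csSup
    (Set.Nonempty.image _ ⟨1/2, by norm_num⟩) h
  obtain ⟨ρ, hρ, rfl⟩ := hv
  refine ⟨ρ, hρ, ?_⟩
  obtain ⟨v', hv', hav'⟩ := exists_lt_of_lt_csSup
    (Set.Nonempty.image _ ⟨1 - ρ, Set.mem_Ioc.2 ⟨by linarith [hρ.2], le_refl _⟩⟩) hav
  obtain ⟨s, hs, rfl⟩ := hv'
  refine ⟨s, hs, ?_⟩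
  have hav2 : a + ρ * r < -Real.log (Bsum W P Q ρ s) := by
    have := hav'
    unfold Bsum
    linarith
  have hBnn : 0 ≤ Bsum W P Q ρ s := Bsum_nonneg hW hP hQ ρ s
  rcases eq_or_lt_of_le hBnn with h0 | h0
  · rw [← h0]; exact Real.exp_pos _
  · have hlog : Real.log (Bsum W P Q ρ s) < -(a + ρ * r) := by
      have hEq : Real.log (Bsum W P Q ρ s) = Real.log (∑ y : 𝓨,
          (∑ x : 𝓧, P x * W x y ^ (s / (s + ρ))) ^ (s + ρ) *
            (∑ x : 𝓧, Q x * W x y) ^ (1 - s)) := rfl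
      linarith [hav2]
    calc Bsum W P Q ρ s = Real.exp (Real.log (Bsum W P Q ρ s)) := (Real.exp_log h0).symm
      _ < Real.exp (-(a + ρ * r)) := Real.exp_lt_exp.2 hlog

end RACwitness

section RACinterp

variable {𝓧 𝓨 : Type*} [Fintype 𝓧] [Fintype 𝓨]

set_option linter.unusedSectionVars false
set_option maxHeartbeats 4000000

/-- Pointwise rpow combination identity. -/
lemma pw_comb {P Wv : ℝ} (hP : 0 ≤ P) (hW : 0 ≤ Wv) {e₁ e₂ θ₁ θ₂ : ℝ}
    (he₁ : 0 ≤ e₁) (he₂ : 0 < e₂) (hθ₁ : 0 < θ₁) (hθ₂ : 0 < θ₂) (hθ : θ₁ + θ₂ = 1) :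
    (P * Wv ^ e₁) ^ θ₁ * (P * Wv ^ e₂) ^ θ₂ = P * Wv ^ (e₁ * θ₁ + e₂ * θ₂) := by
  rcases eq_or_lt_of_le hP with hP0 | hP0
  · rw [← hP0, zero_mul, zero_mul, Real.zero_rpow (ne_of_gt hθ₁), zero_mul, zero_mul]
  rcases eq_or_lt_of_le hW with hW0 | hW0
  · rw [← hW0, Real.zero_rpow (ne_of_gt he₂), mul_zero, Real.zero_rpow (ne_of_gt hθ₂),
      mul_zero, Real.zero_rpow ?hne, mul_zero]
    case hne =>
      have : 0 < e₁ * θ₁ + e₂ * θ₂ := by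
        have h1 : 0 ≤ e₁ * θ₁ := mul_nonneg he₁ (le_of_lt hθ₁)
        have h2 : 0 < e₂ * θ₂ := mul_pos he₂ hθ₂
        linarith
      exact ne_of_gt this
  · rw [Real.mul_rpow (le_of_lt hP0) (Real.rpow_nonneg (le_of_lt hW0) _),
      Real.mul_rpow (le_of_lt hP0) (Real.rpow_nonneg (le_of_lt hW0) _),
      ← Real.rpow_mul (le_of_lt hW0), ← Real.rpow_mul (le_of_lt hW0)]
    calc P ^ θ₁ * Wv ^ (e₁ * θ₁) * (P ^ θ₂ * Wv ^ (e₂ * θ₂))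
        = (P ^ θ₁ * P ^ θ₂) * (Wv ^ (e₁ * θ₁) * Wv ^ (e₂ * θ₂)) := by ring
      _ = P * Wv ^ (e₁ * θ₁ + e₂ * θ₂) := by
          rw [← Real.rpow_add hP0, ← Real.rpow_add hW0, hθ, Real.rpow_one]

/-- Gallager's E0 sum. -/
def E0sum (W : 𝓧 → 𝓨 → ℝ) (P : 𝓧 → ℝ) (ρ : ℝ) : ℝ :=
  ∑ y : 𝓨, (∑ x : 𝓧, P x * W x y ^ (1 / (1 + ρ))) ^ (1 + ρ)

lemma E0sum_nonneg {W : 𝓧 → 𝓨 → ℝ} (hW : IsDMC W) {P : 𝓧 → ℝ} (hP : ∀ x, 0 ≤ P x) (ρ : ℝ) :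
    0 ≤ E0sum W P ρ :=
  Finset.sum_nonneg fun y _ => Real.rpow_nonneg (Finset.sum_nonneg fun x _ =>
    mul_nonneg (hP x) (Real.rpow_nonneg (hW.1 x y) _)) _

/-- Gallager's E0 sum is below all of the `Asum W P P ρ s`. -/
lemma E0sum_le_Asum {W : 𝓧 → 𝓨 → ℝ} (hW : IsDMC W) {P : 𝓧 → ℝ} (hP : ∀ x, 0 ≤ P x)
    {ρ s : ℝ} (hρ0 : 0 < ρ) (hs0 : 0 < s) (hs1 : s ≤ 1) :
    E0sum W P ρ ≤ Asum W P P ρ s := by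
  have h1ρ : (0:ℝ) < 1 + ρ := by linarith
  set β : ℝ := ρ / (1 + ρ) with hβ
  have hβ0 : 0 < β := div_pos hρ0 h1ρ
  have hβ1 : β < 1 := by rw [hβ, div_lt_one h1ρ]; linarith
  refine Finset.sum_le_sum fun y _ => ?_
  have hpt : ∀ x : 𝓧, P x * W x y ^ (1 / (1 + ρ))
      = (P x * W x y ^ (1 - s)) ^ (1 - β) * (P x * W x y ^ (s / ρ)) ^ β := by
    intro x
    rw [pw_comb (hP x) (hW.1 x y) (by linarith : (0:ℝ) ≤ 1 - s)
      (div_pos hs0 hρ0) (by linarith : (0:ℝ) < 1 - β) hβ0 (by ring)]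
    congr 2
    rw [hβ]
    field_simp
    ring
  have hhold : ∑ x : 𝓧, P x * W x y ^ (1 / (1 + ρ))
      ≤ (∑ x : 𝓧, P x * W x y ^ (1 - s)) ^ (1 - β) *
        (∑ x : 𝓧, P x * W x y ^ (s / ρ)) ^ β := by
    rw [Finset.sum_congr rfl fun x _ => hpt x]
    exact hold2 Finset.univ _ _ β (le_of_lt hβ0) (le_of_lt hβ1)
      (fun x _ => mul_nonneg (hP x) (Real.rpow_nonneg (hW.1 x y) _))
      (fun x _ => mul_nonneg (hP x) (Real.rpow_nonneg (hW.1 x y) _))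
  have hnn1 : 0 ≤ ∑ x : 𝓧, P x * W x y ^ (1 / (1 + ρ)) :=
    Finset.sum_nonneg fun x _ => mul_nonneg (hP x) (Real.rpow_nonneg (hW.1 x y) _)
  have hnnA : 0 ≤ ∑ x : 𝓧, P x * W x y ^ (1 - s) :=
    Finset.sum_nonneg fun x _ => mul_nonneg (hP x) (Real.rpow_nonneg (hW.1 x y) _)
  have hnnB : 0 ≤ ∑ x : 𝓧, P x * W x y ^ (s / ρ) :=
    Finset.sum_nonneg fun x _ => mul_nonneg (hP x) (Real.rpow_nonneg (hW.1 x y) _)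
  calc (∑ x : 𝓧, P x * W x y ^ (1 / (1 + ρ))) ^ (1 + ρ)
      ≤ ((∑ x : 𝓧, P x * W x y ^ (1 - s)) ^ (1 - β) *
          (∑ x : 𝓧, P x * W x y ^ (s / ρ)) ^ β) ^ (1 + ρ) :=
        Real.rpow_le_rpow hnn1 hhold (le_of_lt h1ρ)
    _ = (∑ x : 𝓧, P x * W x y ^ (1 - s)) *
          (∑ x : 𝓧, P x * W x y ^ (s / ρ)) ^ ρ := by
        rw [Real.mul_rpow (Real.rpow_nonneg hnnA _) (Real.rpow_nonneg hnnB _),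
          ← Real.rpow_mul hnnA, ← Real.rpow_mul hnnB]
        have e1 : (1 - β) * (1 + ρ) = 1 := by rw [hβ]; field_simp; ring
        have e2 : β * (1 + ρ) = ρ := by rw [hβ]; field_simp
        rw [e1, e2, Real.rpow_one]

/-- The two-parameter family interpolating between `Bsum`, `Csum` and `E0sum`. -/
def Gfun (W : 𝓧 → 𝓨 → ℝ) (P Q : 𝓧 → ℝ) (s v : ℝ) : ℝ :=
  ∑ y : 𝓨, (∑ x : 𝓧, P x * W x y ^ (s / v)) ^ v * (QWy W Q y) ^ (1 - s)

lemma Gfun_eq_Bsum (W : 𝓧 → 𝓨 → ℝ) (P Q : 𝓧 → ℝ) (ρ s : ℝ) :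
    Gfun W P Q s (s + ρ) = Bsum W P Q ρ s := rfl

lemma Gfun_eq_E0sum (W : 𝓧 → 𝓨 → ℝ) (P Q : 𝓧 → ℝ) (ρ : ℝ) :
    Gfun W P Q 1 (1 + ρ) = E0sum W P ρ := by
  unfold Gfun E0sum
  refine Finset.sum_congr rfl fun y _ => ?_
  rw [sub_self, Real.rpow_zero, mul_one]

lemma Gfun_eq_Csum (W : 𝓧 → 𝓨 → ℝ) (P Q : 𝓧 → ℝ) (t : ℝ) :
    Gfun W P Q (1 - t) 1 = Csum W P Q t := by
  unfold Gfun Csum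
  refine Finset.sum_congr rfl fun y _ => ?_
  rw [div_one, Real.rpow_one, sub_sub_cancel]

/-- Hölder interpolation for `Gfun` along the segment hitting `v = 1`. -/
lemma Gfun_interp {W : 𝓧 → 𝓨 → ℝ} (hW : IsDMC W) {P Q : 𝓧 → ℝ} (hP : ∀ x, 0 ≤ P x)
    (hQ : ∀ x, 0 ≤ Q x) {ρ₁ s₀ u₀ β : ℝ} (hρ₁ : 0 < ρ₁) (hs₀ : 0 < s₀) (hs₀u : s₀ < u₀)
    (hu₁ : u₀ < 1) (hβ : β = ρ₁ / (1 + ρ₁ - u₀)) :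
    Gfun W P Q ((1 - β) + β * s₀) 1
      ≤ (Gfun W P Q 1 (1 + ρ₁)) ^ (1 - β) * (Gfun W P Q s₀ u₀) ^ β := by
  have hden : (0:ℝ) < 1 + ρ₁ - u₀ := by linarith
  have hβ0 : 0 < β := by rw [hβ]; exact div_pos hρ₁ hden
  have hβ1 : β < 1 := by
    rw [hβ, div_lt_one hden]; linarith
  have h1ρ : (0:ℝ) < 1 + ρ₁ := by linarith
  have hu₀ : 0 < u₀ := lt_trans hs₀ hs₀u
  set sstar := (1 - β) + β * s₀ with hsstar
  set θ₁ := (1 - β) * (1 + ρ₁) with hθ₁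
  set θ₀ := β * u₀ with hθ₀
  have hθ₁0 : 0 < θ₁ := mul_pos (by linarith) h1ρ
  have hθ₀0 : 0 < θ₀ := mul_pos hβ0 hu₀
  have hθsum : θ₁ + θ₀ = 1 := by
    rw [hθ₁, hθ₀, hβ]
    field_simp
    ring
  have hsstar0 : 0 < sstar := by
    have : 0 < β * s₀ := mul_pos hβ0 hs₀
    rw [hsstar]; linarith
  -- per-y bound
  refine le_trans (Finset.sum_le_sum (fun y _ => ?_))
    (hold2 Finset.univ
      (fun y => (∑ x : 𝓧, P x * W x y ^ ((1:ℝ) / (1 + ρ₁))) ^ (1 + ρ₁) *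
        (QWy W Q y) ^ (1 - (1:ℝ)))
      (fun y => (∑ x : 𝓧, P x * W x y ^ (s₀ / u₀)) ^ u₀ * (QWy W Q y) ^ (1 - s₀))
      β (le_of_lt hβ0) (le_of_lt hβ1)
      (fun y _ => mul_nonneg (Real.rpow_nonneg (Finset.sum_nonneg fun x _ =>
        mul_nonneg (hP x) (Real.rpow_nonneg (hW.1 x y) _)) _)
        (Real.rpow_nonneg (QWy_nonneg hW hQ y) _))
      (fun y _ => mul_nonneg (Real.rpow_nonneg (Finset.sum_nonneg fun x _ =>
        mul_nonneg (hP x) (Real.rpow_nonneg (hW.1 x y) _)) _)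
        (Real.rpow_nonneg (QWy_nonneg hW hQ y) _)))
  -- the pointwise-in-y inequality
  have hinner : ∑ x : 𝓧, P x * W x y ^ sstar
      ≤ (∑ x : 𝓧, P x * W x y ^ ((1:ℝ) / (1 + ρ₁))) ^ θ₁ *
        (∑ x : 𝓧, P x * W x y ^ (s₀ / u₀)) ^ θ₀ := by
    have hpt : ∀ x : 𝓧, P x * W x y ^ sstar
        = (P x * W x y ^ ((1:ℝ) / (1 + ρ₁))) ^ θ₁ * (P x * W x y ^ (s₀ / u₀)) ^ θ₀ := by
      intro x
      rw [pw_comb (hP x) (hW.1 x y) (le_of_lt (by positivity : (0:ℝ) < 1 / (1 + ρ₁)))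
        (div_pos hs₀ hu₀) hθ₁0 hθ₀0 hθsum]
      congr 2
      rw [hθ₁, hθ₀, hsstar]
      field_simp
    rw [Finset.sum_congr rfl fun x _ => hpt x]
    have h := hold2 Finset.univ
      (fun x => P x * W x y ^ ((1:ℝ) / (1 + ρ₁)))
      (fun x => P x * W x y ^ (s₀ / u₀)) θ₀ (le_of_lt hθ₀0) (by linarith)
      (fun x _ => mul_nonneg (hP x) (Real.rpow_nonneg (hW.1 x y) _))
      (fun x _ => mul_nonneg (hP x) (Real.rpow_nonneg (hW.1 x y) _))
    have hθ₁' : 1 - θ₀ = θ₁ := by linarith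
    rw [hθ₁'] at h
    exact h
  -- assemble
  have hXnn : 0 ≤ ∑ x : 𝓧, P x * W x y ^ ((1:ℝ) / (1 + ρ₁)) :=
    Finset.sum_nonneg fun x _ => mul_nonneg (hP x) (Real.rpow_nonneg (hW.1 x y) _)
  have hYnn : 0 ≤ ∑ x : 𝓧, P x * W x y ^ (s₀ / u₀) :=
    Finset.sum_nonneg fun x _ => mul_nonneg (hP x) (Real.rpow_nonneg (hW.1 x y) _)
  have hqnn : 0 ≤ QWy W Q y := QWy_nonneg hW hQ y
  calc (∑ x : 𝓧, P x * W x y ^ (sstar / 1)) ^ (1:ℝ) * (QWy W Q y) ^ (1 - sstar)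
      = (∑ x : 𝓧, P x * W x y ^ sstar) * (QWy W Q y) ^ (1 - sstar) := by
        rw [div_one, Real.rpow_one]
    _ ≤ ((∑ x : 𝓧, P x * W x y ^ ((1:ℝ) / (1 + ρ₁))) ^ θ₁ *
          (∑ x : 𝓧, P x * W x y ^ (s₀ / u₀)) ^ θ₀) * (QWy W Q y) ^ (1 - sstar) :=
        mul_le_mul_of_nonneg_right hinner (Real.rpow_nonneg hqnn _)
    _ = ((∑ x : 𝓧, P x * W x y ^ ((1:ℝ) / (1 + ρ₁))) ^ (1 + ρ₁) *
          (QWy W Q y) ^ (1 - (1:ℝ))) ^ (1 - β) *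
        ((∑ x : 𝓧, P x * W x y ^ (s₀ / u₀)) ^ u₀ * (QWy W Q y) ^ (1 - s₀)) ^ β := by
        rw [sub_self, Real.rpow_zero, mul_one]
        rw [Real.mul_rpow (Real.rpow_nonneg hYnn _) (Real.rpow_nonneg hqnn _),
          ← Real.rpow_mul hXnn, ← Real.rpow_mul hYnn, ← Real.rpow_mul hqnn]
        have e1 : (1 + ρ₁) * (1 - β) = θ₁ := by rw [hθ₁]; ring
        have e2 : u₀ * β = θ₀ := by rw [hθ₀]; ring
        have e3 : (1 - s₀) * β = 1 - sstar := by rw [hsstar]; ring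
        rw [e1, e2, e3]
        ring

/-- **Existence of a good miss-threshold parameter.** -/
lemma miss_witness {W : 𝓧 → 𝓨 → ℝ} (hW : IsDMC W) {P Q : 𝓧 → ℝ} (hP : IsDist P)
    (hQ : IsDist Q) {r a : ℝ} (hr : 0 ≤ r) (ha : 0 < a)
    (hEm : a < Em W r P P) (hEi : a < Ei W r P Q) :
    ∃ t ∈ Set.Ioo (0:ℝ) 1, Csum W P Q t < Real.exp (-(a + r * t)) := by
  obtain ⟨ρ₁, hρ₁, s₁, hs₁, hA⟩ := em_witness hW hP.1 hP.1 hr ha hEm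
  have hE0 : E0sum W P ρ₁ < Real.exp (-(a + ρ₁ * r)) :=
    lt_of_le_of_lt (E0sum_le_Asum hW hP.1 hρ₁.1 hs₁.1 hs₁.2) hA
  obtain ⟨ρ₀, hρ₀, s₀, hs₀, hB⟩ := ei_witness hW hP.1 hQ.1 hr ha hEi
  have hs₀1 : s₀ < 1 := lt_of_le_of_lt hs₀.2 (by linarith [hρ₀.1])
  rcases eq_or_lt_of_le hs₀.2 with heq | hlt
  · -- boundary case u₀ = 1 : use t = ρ₀
    refine ⟨ρ₀, hρ₀, ?_⟩
    have h1 : Csum W P Q ρ₀ = Bsum W P Q ρ₀ s₀ := by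
      rw [← Gfun_eq_Csum, ← Gfun_eq_Bsum]
      have e1 : 1 - ρ₀ = s₀ := heq.symm
      have e2 : s₀ + ρ₀ = 1 := by linarith [heq]
      rw [e1, e2]
    rw [h1]
    refine lt_of_lt_of_le hB (le_of_eq ?_)
    rw [mul_comm ρ₀ r]
  · -- interior case u₀ < 1
    set u₀ := s₀ + ρ₀ with hu₀def
    have hu₀1 : u₀ < 1 := by rw [hu₀def]; linarith
    set β := ρ₁ / (1 + ρ₁ - u₀) with hβ
    have hden : (0:ℝ) < 1 + ρ₁ - u₀ := by linarith [hρ₁.1]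
    have hβ0 : 0 < β := by rw [hβ]; exact div_pos hρ₁.1 hden
    have hβ1 : β < 1 := by rw [hβ, div_lt_one hden]; linarith
    set t := β * (1 - s₀) with ht
    have ht0 : 0 < t := mul_pos hβ0 (by linarith)
    have ht1 : t < 1 := by
      have h1 : t ≤ β * 1 := by
        rw [ht]
        refine mul_le_mul_of_nonneg_left (by linarith [hs₀.1]) (le_of_lt hβ0)
      calc t ≤ β * 1 := h1
        _ = β := mul_one β
        _ < 1 := hβ1
    refine ⟨t, ⟨ht0, ht1⟩, ?_⟩
    have hseq : 1 - t = (1 - β) + β * s₀ := by rw [ht]; ring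
    have hkey : ρ₁ = β * (1 + ρ₁ - u₀) := by
      rw [hβ]; field_simp
    have hlin : (1 - β) * ρ₁ + β * ρ₀ = t := by
      rw [ht]
      linear_combination hkey - β * hu₀def
    have hinterp := Gfun_interp hW hP.1 hQ.1 hρ₁.1 hs₀.1
      (by rw [hu₀def]; linarith [hρ₀.1] : s₀ < u₀) hu₀1 hβ
    rw [hu₀def] at hinterp
    rw [Gfun_eq_E0sum, Gfun_eq_Bsum] at hinterp
    have hC : Csum W P Q t ≤ E0sum W P ρ₁ ^ (1 - β) * Bsum W P Q ρ₀ s₀ ^ β := by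
      rw [← Gfun_eq_Csum W P Q t, hseq]
      exact hinterp
    have hE0nn := E0sum_nonneg hW hP.1 ρ₁
    have hBnn := Bsum_nonneg hW hP.1 hQ.1 ρ₀ s₀
    have k1 : E0sum W P ρ₁ ^ (1 - β) ≤ Real.exp (-(a + ρ₁ * r)) ^ (1 - β) :=
      Real.rpow_le_rpow hE0nn (le_of_lt hE0) (by linarith)
    have k2 : Bsum W P Q ρ₀ s₀ ^ β < Real.exp (-(a + ρ₀ * r)) ^ β :=
      Real.rpow_lt_rpow hBnn hB hβ0
    calc Csum W P Q t
        ≤ E0sum W P ρ₁ ^ (1 - β) * Bsum W P Q ρ₀ s₀ ^ β := hC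
      _ ≤ Real.exp (-(a + ρ₁ * r)) ^ (1 - β) * Bsum W P Q ρ₀ s₀ ^ β :=
          mul_le_mul_of_nonneg_right k1 (Real.rpow_nonneg hBnn _)
      _ < Real.exp (-(a + ρ₁ * r)) ^ (1 - β) * Real.exp (-(a + ρ₀ * r)) ^ β :=
          mul_lt_mul_of_pos_left k2 (Real.rpow_pos_of_pos (Real.exp_pos _) _)
      _ = Real.exp (-(a + r * t)) := by
          rw [← Real.exp_mul, ← Real.exp_mul, ← Real.exp_add]
          congr 1
          linear_combination (-r) * hlin
  
end RACinterp

section RACdegenerate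

variable {𝓧 𝓨 : Type*} [Fintype 𝓧] [Fintype 𝓨]
variable {W : 𝓧 → 𝓨 → ℝ} {M : ℕ} {rate : Fin M → ℝ} {Pd : Fin M → 𝓧 → ℝ}

set_option linter.unusedSectionVars false
set_option maxHeartbeats 1000000

/-- If the supports never overlap, `Ei ≤ 0`. -/
lemma Ei_nonpos (hW : IsDMC W) {P Q : 𝓧 → ℝ} (hP : ∀ x, 0 ≤ P x) (hQ : ∀ x, 0 ≤ Q x)
    {r : ℝ} (hr : 0 ≤ r)
    (hno : ∀ x x' y, ¬(0 < P x ∧ 0 < Q x' ∧ 0 < W x y ∧ 0 < W x' y)) :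
    Ei W r P Q ≤ 0 := by
  unfold Ei
  refine Real.sSup_le ?_ le_rfl
  rintro v ⟨ρ, hρ, rfl⟩
  refine Real.sSup_le ?_ le_rfl
  rintro v' ⟨s, hs, rfl⟩
  have hs1 : s < 1 := lt_of_le_of_lt hs.2 (by linarith [hρ.1])
  have hB0 : (∑ y : 𝓨, (∑ x : 𝓧, P x * W x y ^ (s / (s + ρ))) ^ (s + ρ) *
      (∑ x : 𝓧, Q x * W x y) ^ (1 - s)) = 0 := by
    refine Finset.sum_eq_zero fun y _ => ?_
    by_cases hq : (∑ x : 𝓧, Q x * W x y) = 0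
    · rw [hq, Real.zero_rpow (by linarith : (1:ℝ) - s ≠ 0), mul_zero]
    · have hqpos : 0 < ∑ x : 𝓧, Q x * W x y :=
        lt_of_le_of_ne (Finset.sum_nonneg fun x _ => mul_nonneg (hQ x) (hW.1 x y))
          (Ne.symm hq)
      obtain ⟨x', _, hx'⟩ := Finset.exists_ne_zero_of_sum_ne_zero hq
      have hQx' : 0 < Q x' := by
        rcases eq_or_lt_of_le (hQ x') with h | h
        · exact absurd (by rw [← h, zero_mul]) hx'
        · exact h
      have hWx' : 0 < W x' y := by
        rcases eq_or_lt_of_le (hW.1 x' y) with h | h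
        · exact absurd (by rw [← h, mul_zero]) hx'
        · exact h
      have hfirst : (∑ x : 𝓧, P x * W x y ^ (s / (s + ρ))) = 0 := by
        refine Finset.sum_eq_zero fun x _ => ?_
        rcases eq_or_lt_of_le (hP x) with hPx | hPx
        · rw [← hPx, zero_mul]
        rcases eq_or_lt_of_le (hW.1 x y) with hWx | hWx
        · rw [← hWx, Real.zero_rpow
            (ne_of_gt (div_pos hs.1 (by linarith [hρ.1, hs.1]))), mul_zero]
        · exact absurd ⟨hPx, hQx', hWx, hWx'⟩ (hno x x' y)
      rw [hfirst, Real.zero_rpow (ne_of_gt (by linarith [hs.1, hρ.1] : (0:ℝ) < s + ρ)),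
        zero_mul]
  show -ρ * r - Real.log (∑ y : 𝓨, (∑ x : 𝓧, P x * W x y ^ (s / (s + ρ))) ^ (s + ρ) *
      (∑ x : 𝓧, Q x * W x y) ^ (1 - s)) ≤ 0
  rw [hB0, Real.log_zero, sub_zero]
  have : 0 ≤ ρ * r := mul_nonneg (le_of_lt hρ.1) hr
  linarith

lemma numMsg_pos (hrate : ∀ i, 0 ≤ rate i) (N : ℕ) (i : Fin M) : 0 < numMsg N rate i := by
  unfold numMsg
  rw [Nat.floor_pos]
  exact Real.one_le_exp (mul_nonneg (Nat.cast_nonneg N) (hrate i))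

lemma prTx_false (hW : IsDMC W) (hPd : ∀ i, IsDist (Pd i)) {N : ℕ} (p : Msg N rate) :
    prTx W rate Pd p (fun _ _ => False) = 0 := by
  unfold prTx
  simp

lemma Pes_bddAbove (hW : IsDMC W) (hPd : ∀ i, IsDist (Pd i)) {N : ℕ}
    (R : Finset (Fin M)) (D : Cbk 𝓧 N rate → (Fin N → 𝓨) → Option (Msg N rate)) :
    BddAbove (Set.range (fun p : Msg N rate =>
      if p.1 ∈ R then prTx W rate Pd p (fun c y => D c y ≠ some p)
      else prTx W rate Pd p (fun c y => D c y ≠ none))) := by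
  refine ⟨1, ?_⟩
  rintro v ⟨p, rfl⟩
  simp only []
  split <;> exact prTx_le_one hW hPd p _

lemma Pes_le_one (hW : IsDMC W) (hPd : ∀ i, IsDist (Pd i)) {N : ℕ}
    (R : Finset (Fin M)) (D : Cbk 𝓧 N rate → (Fin N → 𝓨) → Option (Msg N rate)) :
    Pes W N rate Pd R D ≤ 1 := by
  unfold Pes
  refine Real.sSup_le ?_ (by norm_num)
  rintro v ⟨p, rfl⟩
  simp only []
  split <;> exact prTx_le_one hW hPd p _

/-- The always-`none` decoder has system error probability 1. -/
lemma Pes_none (hW : IsDMC W) (hPd : ∀ i, IsDist (Pd i)) (hrate : ∀ i, 0 ≤ rate i)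
    (R : Finset (Fin M)) (hR : R.Nonempty) (N : ℕ) :
    Pes W N rate Pd R (fun (_ : Cbk 𝓧 N rate) (_ : Fin N → 𝓨) => none) = 1 := by
  unfold Pes
  apply le_antisymm
  · refine Real.sSup_le ?_ (by norm_num)
    rintro v ⟨p, rfl⟩
    simp only []
    split <;> exact prTx_le_one hW hPd p _
  · obtain ⟨i₀, hi₀⟩ := hR
    set p₀ : Msg N rate := ⟨i₀, ⟨0, numMsg_pos hrate N i₀⟩⟩ with hp₀
    refine le_csSup (Pes_bddAbove hW hPd R _) ?_
    refine ⟨p₀, ?_⟩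
    simp only []
    rw [if_pos (by exact hi₀)]
    have : prTx W rate Pd p₀ (fun _ _ => (none : Option (Msg N rate)) ≠ some p₀)
        = prTx W rate Pd p₀ (fun _ _ => True) := by
      unfold prTx
      refine Finset.sum_congr rfl fun c _ => Finset.sum_congr rfl fun y _ => ?_
      congr 1
      simp
    rw [this, prTx_eq_one hW hPd]

/-- Positivity of the system error probability in the presence of support overlap. -/
lemma Pes_pos_of_overlap (hW : IsDMC W) (hPd : ∀ i, IsDist (Pd i)) (hrate : ∀ i, 0 ≤ rate i)
    (R : Finset (Fin M)) {i₀ k₀ : Fin M} (hi₀ : i₀ ∈ R) (hk₀ : k₀ ∉ R)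
    (hov : 0 < ∑ y' : 𝓨, QWy W (Pd i₀) y' * QWy W (Pd k₀) y')
    (N : ℕ) (D : Cbk 𝓧 N rate → (Fin N → 𝓨) → Option (Msg N rate)) :
    (∑ y' : 𝓨, QWy W (Pd i₀) y' * QWy W (Pd k₀) y') ^ N ≤ 2 * Pes W N rate Pd R D := by
  have hPnn : ∀ i x, 0 ≤ Pd i x := fun i x => (hPd i).1 x
  set p₁ : Msg N rate := ⟨i₀, ⟨0, numMsg_pos hrate N i₀⟩⟩ with hp₁
  set p₂ : Msg N rate := ⟨k₀, ⟨0, numMsg_pos hrate N k₀⟩⟩ with hp₂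
  have hne : p₁ ≠ p₂ := by
    intro h
    have : i₀ = k₀ := congrArg Sigma.fst h
    exact hk₀ (this ▸ hi₀)
  have key : ∀ (c : Cbk 𝓧 N rate) (y : Fin N → 𝓨) (ind₁ ind₂ : ℝ),
      0 ≤ ind₁ → 0 ≤ ind₂ → (D c y ≠ some p₁ → ind₁ = 1) → (D c y ≠ none → ind₂ = 1) →
      cbkProb rate Pd c * (Wn W (c p₁.1 p₁.2) y * Wn W (c p₂.1 p₂.2) y)
      ≤ cbkProb rate Pd c * Wn W (c p₁.1 p₁.2) y * ind₁ +
        cbkProb rate Pd c * Wn W (c p₂.1 p₂.2) y * ind₂ := by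
    intro c y ind₁ ind₂ hind₁ hind₂ hif₁ hif₂
    have h1 : (0:ℝ) ≤ cbkProb rate Pd c := cbkProb_nonneg hPnn c
    have hw1 : 0 ≤ Wn W (c p₁.1 p₁.2) y := Wn_nonneg hW _ _
    have hw2 : 0 ≤ Wn W (c p₂.1 p₂.2) y := Wn_nonneg hW _ _
    have hw1' : Wn W (c p₁.1 p₁.2) y ≤ 1 := Wn_le_one hW _ _
    have hw2' : Wn W (c p₂.1 p₂.2) y ≤ 1 := Wn_le_one hW _ _
    by_cases hd : D c y = some p₁
    · -- then D c y ≠ none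
      have h2 : ind₂ = 1 := hif₂ (by rw [hd]; exact Option.some_ne_none _)
      rw [h2, mul_one]
      have : cbkProb rate Pd c * (Wn W (c p₁.1 p₁.2) y * Wn W (c p₂.1 p₂.2) y)
          ≤ cbkProb rate Pd c * Wn W (c p₂.1 p₂.2) y := by
        rw [mul_comm (Wn W (c p₁.1 p₁.2) y), ← mul_assoc]
        refine mul_le_of_le_one_right (mul_nonneg h1 hw2) hw1'
      have hnn : (0:ℝ) ≤ cbkProb rate Pd c * Wn W (c p₁.1 p₁.2) y * ind₁ :=
        mul_nonneg (mul_nonneg h1 hw1) hind₁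
      linarith
    · have h2 : ind₁ = 1 := hif₁ hd
      rw [h2, mul_one]
      have : cbkProb rate Pd c * (Wn W (c p₁.1 p₁.2) y * Wn W (c p₂.1 p₂.2) y)
          ≤ cbkProb rate Pd c * Wn W (c p₁.1 p₁.2) y := by
        rw [← mul_assoc]
        refine mul_le_of_le_one_right (mul_nonneg h1 hw1) hw2'
      have hnn : (0:ℝ) ≤ cbkProb rate Pd c * Wn W (c p₂.1 p₂.2) y * ind₂ :=
        mul_nonneg (mul_nonneg h1 hw2) hind₂
      linarith
  have hsum : (∑ y' : 𝓨, QWy W (Pd i₀) y' * QWy W (Pd k₀) y') ^ N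
      ≤ prTx W rate Pd p₁ (fun c y => D c y ≠ some p₁) +
        prTx W rate Pd p₂ (fun c y => D c y ≠ none) := by
    have lhs_eq : ∑ c : Cbk 𝓧 N rate, ∑ y : Fin N → 𝓨,
        cbkProb rate Pd c * (Wn W (c p₁.1 p₁.2) y * Wn W (c p₂.1 p₂.2) y)
        = (∑ y' : 𝓨, QWy W (Pd i₀) y' * QWy W (Pd k₀) y') ^ N := by
      rw [Finset.sum_comm]
      have hy : ∀ y : Fin N → 𝓨, ∑ c : Cbk 𝓧 N rate,
          cbkProb rate Pd c * (Wn W (c p₁.1 p₁.2) y * Wn W (c p₂.1 p₂.2) y)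
          = ∏ j, (QWy W (Pd i₀) (y j) * QWy W (Pd k₀) (y j)) := by
        intro y
        rw [cw_tilt2 hPd p₁ p₂ hne (fun z => Wn W z y) (fun z => Wn W z y)]
        rw [strWn_one hW, strWn_one hW]
        unfold statY
        rw [← Finset.prod_mul_distrib]
      rw [Finset.sum_congr rfl fun y _ => hy y,
        ySum_fact (fun y' => QWy W (Pd i₀) y' * QWy W (Pd k₀) y')]
    rw [← lhs_eq]
    unfold prTx
    rw [← Finset.sum_add_distrib]
    refine Finset.sum_le_sum fun c _ => ?_
    rw [← Finset.sum_add_distrib]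
    refine Finset.sum_le_sum fun y _ => ?_
    refine key c y _ _ ?_ ?_ ?_ ?_
    · split <;> norm_num
    · split <;> norm_num
    · exact fun h => if_pos h
    · exact fun h => if_pos h
  have hP1 : prTx W rate Pd p₁ (fun c y => D c y ≠ some p₁) ≤ Pes W N rate Pd R D := by
    unfold Pes
    refine le_csSup (Pes_bddAbove hW hPd R D) ⟨p₁, ?_⟩
    simp only []
    rw [if_pos (by exact hi₀)]
  have hP2 : prTx W rate Pd p₂ (fun c y => D c y ≠ none) ≤ Pes W N rate Pd R D := by
    unfold Pes
    refine le_csSup (Pes_bddAbove hW hPd R D) ⟨p₂, ?_⟩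
    simp only []
    rw [if_neg (by exact hk₀)]
  linarith

end RACdegenerate
/-- Single-user error exponent (Corollary 1). -/
theorem stmt1 {𝓧 𝓨 : Type*} [Fintype 𝓧] [Fintype 𝓨] [Nonempty 𝓧] [Nonempty 𝓨]
    (W : 𝓧 → 𝓨 → ℝ) (hW : IsDMC W)
    (M : ℕ)
    (rate : Fin M → ℝ) (hrate : ∀ i, 0 ≤ rate i)
    (Pd : Fin M → 𝓧 → ℝ) (hPd : ∀ i, IsDist (Pd i))
    (R : Finset (Fin M)) (hR : R.Nonempty) (hRc : (Finset.univ \ R).Nonempty) :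
    ∃ D : (N : ℕ) → Cbk 𝓧 N rate → (Fin N → 𝓨) → Option (Msg N rate),
      (∀ N c y p, D N c y = some p → p.1 ∈ R) ∧
      min
        (sInf {e : ℝ | ∃ r ∈ R, ∃ rt ∈ R, e = Em W (rate rt) (Pd r) (Pd rt)})
        (sInf {e : ℝ | ∃ r ∈ R, ∃ rt ∈ Finset.univ \ R,
            e = Ei W (rate r) (Pd r) (Pd rt)})
        ≤ Filter.liminf
            (fun N : ℕ => -(1 / (N : ℝ)) * Real.log (Pes W N rate Pd R (D N)))
            Filter.atTop := by
  classical
  set S1 : Set ℝ := {e : ℝ | ∃ r ∈ R, ∃ rt ∈ R, e = Em W (rate rt) (Pd r) (Pd rt)} with hS1def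
  set S2 : Set ℝ := {e : ℝ | ∃ r ∈ R, ∃ rt ∈ Finset.univ \ R,
      e = Ei W (rate r) (Pd r) (Pd rt)} with hS2def
  have hbdd1 : BddBelow S1 := by
    refine Set.Finite.bddBelow (Set.Finite.subset
      (Set.finite_univ.image (fun pr : Fin M × Fin M =>
        Em W (rate pr.2) (Pd pr.1) (Pd pr.2))) ?_)
    rintro e ⟨r, hr, rt, hrt, rfl⟩
    exact ⟨(r, rt), Set.mem_univ _, rfl⟩
  have hbdd2 : BddBelow S2 := by
    refine Set.Finite.bddBelow (Set.Finite.subset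
      (Set.finite_univ.image (fun pr : Fin M × Fin M =>
        Ei W (rate pr.1) (Pd pr.1) (Pd pr.2))) ?_)
    rintro e ⟨r, hr, rt, hrt, rfl⟩
    exact ⟨(r, rt), Set.mem_univ _, rfl⟩
  by_cases hT : min (sInf S1) (sInf S2) ≤ 0
  · -- trivial branch : the always-`none` decoder
    refine ⟨fun N _ _ => none, fun N c y p h => absurd h (by simp), ?_⟩
    have hfun : (fun N : ℕ => -(1 / (N : ℝ)) *
        Real.log (Pes W N rate Pd R (fun _ _ => none))) = fun _ : ℕ => (0:ℝ) := by
      funext N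
      rw [Pes_none hW hPd hrate R hR N, Real.log_one, mul_zero]
    rw [hfun, Filter.liminf_const]
    exact hT
  · push_neg at hT
    -- overlap pair
    have hov : ∃ i₀ ∈ R, ∃ k₀ ∈ Finset.univ \ R,
        0 < ∑ y' : 𝓨, QWy W (Pd i₀) y' * QWy W (Pd k₀) y' := by
      by_contra hno
      push_neg at hno
      obtain ⟨i₀, hi₀⟩ := hR
      obtain ⟨k₀, hk₀⟩ := hRc
      have hz := hno i₀ hi₀ k₀ hk₀
      have hnopair : ∀ x x' y, ¬(0 < Pd i₀ x ∧ 0 < Pd k₀ x' ∧ 0 < W x y ∧ 0 < W x' y) := by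
        rintro x x' y ⟨h1, h2, h3, h4⟩
        have t1 : 0 < QWy W (Pd i₀) y := by
          refine lt_of_lt_of_le (mul_pos h1 h3) ?_
          exact Finset.single_le_sum
            (fun x'' _ => mul_nonneg ((hPd i₀).1 x'') (hW.1 x'' y)) (Finset.mem_univ x)
        have t2 : 0 < QWy W (Pd k₀) y := by
          refine lt_of_lt_of_le (mul_pos h2 h4) ?_
          exact Finset.single_le_sum
            (fun x'' _ => mul_nonneg ((hPd k₀).1 x'') (hW.1 x'' y)) (Finset.mem_univ x')
        have : 0 < ∑ y' : 𝓨, QWy W (Pd i₀) y' * QWy W (Pd k₀) y' := by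
          refine lt_of_lt_of_le (mul_pos t1 t2) ?_
          exact Finset.single_le_sum (fun y'' _ => mul_nonneg
            (QWy_nonneg hW ((hPd i₀).1) y'') (QWy_nonneg hW ((hPd k₀).1) y''))
            (Finset.mem_univ y)
        exact absurd this (not_lt.2 hz)
      have hEi0 : Ei W (rate i₀) (Pd i₀) (Pd k₀) ≤ 0 := by
        refine Ei_nonpos hW ((hPd i₀).1) ((hPd k₀).1) (hrate i₀) ?_
        intro x x' y h
        exact hnopair x x' y h
      have hmem : Ei W (rate i₀) (Pd i₀) (Pd k₀) ∈ S2 := ⟨i₀, hi₀, k₀, hk₀, rfl⟩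
      have h2 : sInf S2 ≤ 0 := le_trans (csInf_le hbdd2 hmem) hEi0
      have : min (sInf S1) (sInf S2) ≤ 0 := le_trans (min_le_right _ _) h2
      linarith [hT]
    obtain ⟨i₀, hi₀, k₀, hk₀m, hovpos⟩ := hov
    have hMpos : (1:ℝ) ≤ (M:ℝ) := by
      have : 0 < M := Fin.pos i₀
      exact_mod_cast this
    -- the decoder
    refine ⟨fun N => decoder W rate Pd R N,
      fun N c y p h => decoder_mem W rate Pd R c y p h, ?_⟩
    -- KEY uniform bound
    have KEY : ∀ a : ℝ, 0 < a → a < min (sInf S1) (sInf S2) → ∀ N : ℕ,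
        Pes W N rate Pd R (decoder W rate Pd R N)
          ≤ (M:ℝ) * Real.exp (-((N:ℝ) * a)) := by
      intro a ha0 haT N
      have haS1 : ∀ e ∈ S1, a < e := fun e he =>
        lt_of_lt_of_le haT (le_trans (min_le_left _ _) (csInf_le hbdd1 he))
      have haS2 : ∀ e ∈ S2, a < e := fun e he =>
        lt_of_lt_of_le haT (le_trans (min_le_right _ _) (csInf_le hbdd2 he))
      unfold Pes
      refine Real.sSup_le ?_
        (mul_nonneg (by linarith) (le_of_lt (Real.exp_pos _)))
      rintro v ⟨p, rfl⟩
      simp only []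
      by_cases hp : p.1 ∈ R
      · rw [if_pos hp]
        -- decomposition of the decoding-error event
        set Sset : Fin M → Finset (Msg N rate) := fun k =>
          (Finset.univ.image (fun w : Fin (numMsg N rate k) => (⟨k, w⟩ : Msg N rate)))
            \ {p} with hSset
        have hstep := prTx_le_sum hW (fun i x => (hPd i).1 x) p
          (Finset.univ : Finset (Fin M))
          (fun c y => decoder W rate Pd R N c y ≠ some p)
          (fun k c y =>
            (k ∈ R ∧ ∃ q ∈ Sset k, Wn W (c p.1 p.2) y ≤ Wn W (c q.1 q.2) y) ∨
            (k ∉ R ∧ Wn W (c p.1 p.2) y <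
              Real.exp ((N:ℝ) * rate p.1) * statY W (Pd k) y))
          ?hincl
        case hincl =>
          intro c y hE
          rcases decoder_err W rate Pd R c y p hp hE with hnopass | ⟨q, hqR, hqp, hle⟩
          · unfold passes at hnopass
            push_neg at hnopass
            obtain ⟨k, hkmem, hklt⟩ := hnopass
            refine ⟨k, Finset.mem_univ _, Or.inr ⟨(Finset.mem_sdiff.1 hkmem).2, ?_⟩⟩
            exact hklt
          · refine ⟨q.1, Finset.mem_univ _, Or.inl ⟨hqR, ⟨q, ?_, hle⟩⟩⟩
            rw [hSset]
            refine Finset.mem_sdiff.2 ⟨?_, ?_⟩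
            · exact Finset.mem_image.2 ⟨q.2, Finset.mem_univ _, Sigma.eta q⟩
            · simpa using hqp
        refine le_trans hstep ?_
        have hterm : ∀ k : Fin M, prTx W rate Pd p (fun c y =>
            (k ∈ R ∧ ∃ q ∈ Sset k, Wn W (c p.1 p.2) y ≤ Wn W (c q.1 q.2) y) ∨
            (k ∉ R ∧ Wn W (c p.1 p.2) y <
              Real.exp ((N:ℝ) * rate p.1) * statY W (Pd k) y))
            ≤ Real.exp (-((N:ℝ) * a)) := by
          intro k
          by_cases hk : k ∈ R
          · -- confusion with class k
            have hmono := prTx_mono hW (fun i x => (hPd i).1 x) p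
              (E := fun c y =>
                (k ∈ R ∧ ∃ q ∈ Sset k, Wn W (c p.1 p.2) y ≤ Wn W (c q.1 q.2) y) ∨
                (k ∉ R ∧ Wn W (c p.1 p.2) y <
                  Real.exp ((N:ℝ) * rate p.1) * statY W (Pd k) y))
              (E' := fun c y => ∃ q ∈ Sset k, Wn W (c p.1 p.2) y ≤ Wn W (c q.1 q.2) y)
              (by
                rintro c y (⟨_, h⟩ | ⟨hk', _⟩)
                · exact h
                · exact absurd hk hk')
            refine le_trans hmono ?_
            have hEmmem : Em W (rate k) (Pd p.1) (Pd k) ∈ S1 := ⟨p.1, hp, k, hk, rfl⟩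
            obtain ⟨ρ, hρ, s, hs, hAs⟩ := em_witness hW ((hPd p.1).1) ((hPd k).1)
              (hrate k) ha0 (haS1 _ hEmmem)
            have hSprop : ∀ q ∈ Sset k, q.1 = k := by
              intro q hq
              rw [hSset] at hq
              obtain ⟨w, _, rfl⟩ := Finset.mem_image.1 (Finset.mem_sdiff.1 hq).1
              rfl
            have hSp : p ∉ Sset k := by
              rw [hSset]
              intro hcon
              exact (Finset.mem_sdiff.1 hcon).2 (Finset.mem_singleton_self p)
            have hcb := confusion_bound hW hPd p k (Sset k) hSprop hSp ρ s
              hρ.1 hρ.2 hs.1 hs.2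
            refine le_trans hcb ?_
            have hcard : ((Sset k).card : ℝ) ≤ Real.exp ((N:ℝ) * rate k) := by
              have h1 : (Sset k).card ≤ numMsg N rate k := by
                rw [hSset]
                calc ((Finset.univ.image (fun w : Fin (numMsg N rate k) =>
                    (⟨k, w⟩ : Msg N rate))) \ {p}).card
                    ≤ (Finset.univ.image (fun w : Fin (numMsg N rate k) =>
                      (⟨k, w⟩ : Msg N rate))).card :=
                      Finset.card_le_card (Finset.sdiff_subset)
                  _ ≤ (Finset.univ : Finset (Fin (numMsg N rate k))).card :=
                      Finset.card_image_le
                  _ = numMsg N rate k := by rw [Finset.card_univ, Fintype.card_fin]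
              calc ((Sset k).card : ℝ) ≤ (numMsg N rate k : ℝ) := by exact_mod_cast h1
                _ ≤ Real.exp ((N:ℝ) * rate k) := Nat.floor_le (le_of_lt (Real.exp_pos _))
            have hA : ((Sset k).card : ℝ) ^ ρ * Asum W (Pd p.1) (Pd k) ρ s ^ N
                ≤ Real.exp ((N:ℝ) * rate k) ^ ρ *
                  Real.exp (-(a + ρ * rate k)) ^ N := by
              refine mul_le_mul ?_ ?_ ?_ ?_
              · exact Real.rpow_le_rpow (Nat.cast_nonneg _) hcard (le_of_lt hρ.1)
              · exact pow_le_pow_left₀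
                  (Asum_nonneg hW ((hPd p.1).1) ((hPd k).1) ρ s) (le_of_lt hAs) N
              · exact pow_nonneg (Asum_nonneg hW ((hPd p.1).1) ((hPd k).1) ρ s) N
              · exact Real.rpow_nonneg (le_of_lt (Real.exp_pos _)) _
            refine le_trans hA (le_of_eq ?_)
            rw [← Real.exp_mul, ← Real.exp_nat_mul, ← Real.exp_add]
            congr 1
            ring
          · -- miss w.r.t. the non-active class k
            have hmono := prTx_mono hW (fun i x => (hPd i).1 x) p
              (E := fun c y =>
                (k ∈ R ∧ ∃ q ∈ Sset k, Wn W (c p.1 p.2) y ≤ Wn W (c q.1 q.2) y) ∨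
                (k ∉ R ∧ Wn W (c p.1 p.2) y <
                  Real.exp ((N:ℝ) * rate p.1) * statY W (Pd k) y))
              (E' := fun c y => Wn W (c p.1 p.2) y <
                  Real.exp ((N:ℝ) * rate p.1) * statY W (Pd k) y)
              (by
                rintro c y (⟨hk', _⟩ | ⟨_, h⟩)
                · exact absurd hk' hk
                · exact h)
            refine le_trans hmono ?_
            have hEmmem : Em W (rate p.1) (Pd p.1) (Pd p.1) ∈ S1 := ⟨p.1, hp, p.1, hp, rfl⟩
            have hEimem : Ei W (rate p.1) (Pd p.1) (Pd k) ∈ S2 :=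
              ⟨p.1, hp, k, Finset.mem_sdiff.2 ⟨Finset.mem_univ _, hk⟩, rfl⟩
            obtain ⟨t, ht, hCs⟩ := miss_witness hW (hPd p.1) (hPd k) (hrate p.1) ha0
              (haS1 _ hEmmem) (haS2 _ hEimem)
            have hmb := miss_bound hW hPd p k t ((N:ℝ) * rate p.1) ht.1 ht.2
            refine le_trans hmb ?_
            have hC : Real.exp ((N:ℝ) * rate p.1 * t) * Csum W (Pd p.1) (Pd k) t ^ N
                ≤ Real.exp ((N:ℝ) * rate p.1 * t) *
                  Real.exp (-(a + rate p.1 * t)) ^ N := by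
              refine mul_le_mul_of_nonneg_left ?_ (le_of_lt (Real.exp_pos _))
              exact pow_le_pow_left₀ (Csum_nonneg hW ((hPd p.1).1) ((hPd k).1) t)
                (le_of_lt hCs) N
            refine le_trans hC (le_of_eq ?_)
            rw [← Real.exp_nat_mul, ← Real.exp_add]
            congr 1
            ring
        calc ∑ k : Fin M, prTx W rate Pd p _
            ≤ ∑ k : Fin M, Real.exp (-((N:ℝ) * a)) := Finset.sum_le_sum fun k _ => hterm k
          _ = (M:ℝ) * Real.exp (-((N:ℝ) * a)) := by
              rw [Finset.sum_const, Finset.card_univ, Fintype.card_fin, nsmul_eq_mul]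
      · rw [if_neg hp]
        -- false-alarm events
        have hstep := prTx_le_sum hW (fun i x => (hPd i).1 x) p R
          (fun c y => decoder W rate Pd R N c y ≠ none)
          (fun k c y => ∃ w : Fin (numMsg N rate k),
            Real.exp ((N:ℝ) * rate k) * statY W (Pd p.1) y ≤ Wn W (c k w) y)
          ?hincl2
        case hincl2 =>
          intro c y hE
          obtain ⟨q, hqR, hqpass⟩ := decoder_some W rate Pd R c y hE
          refine ⟨q.1, hqR, q.2, ?_⟩
          exact hqpass p.1 (Finset.mem_sdiff.2 ⟨Finset.mem_univ _, hp⟩)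
        refine le_trans hstep ?_
        have hterm : ∀ k ∈ R, prTx W rate Pd p (fun c y =>
            ∃ w : Fin (numMsg N rate k),
              Real.exp ((N:ℝ) * rate k) * statY W (Pd p.1) y ≤ Wn W (c k w) y)
            ≤ Real.exp (-((N:ℝ) * a)) := by
          intro k hk
          have hEimem : Ei W (rate k) (Pd k) (Pd p.1) ∈ S2 :=
            ⟨k, hk, p.1, Finset.mem_sdiff.2 ⟨Finset.mem_univ _, hp⟩, rfl⟩
          obtain ⟨ρ, hρ, s, hs, hBs⟩ := ei_witness hW ((hPd k).1) ((hPd p.1).1)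
            (hrate k) ha0 (haS2 _ hEimem)
          have hpk : p.1 ≠ k := fun h => hp (h ▸ hk)
          have hfb := fa_bound hW hPd p k hpk ρ s hρ.1 hρ.2 hs.1 hs.2 (hrate k)
          refine le_trans hfb ?_
          have hB : Real.exp (ρ * ((N:ℝ) * rate k)) * Bsum W (Pd k) (Pd p.1) ρ s ^ N
              ≤ Real.exp (ρ * ((N:ℝ) * rate k)) * Real.exp (-(a + ρ * rate k)) ^ N := by
            refine mul_le_mul_of_nonneg_left ?_ (le_of_lt (Real.exp_pos _))
            exact pow_le_pow_left₀ (Bsum_nonneg hW ((hPd k).1) ((hPd p.1).1) ρ s)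
              (le_of_lt hBs) N
          refine le_trans hB (le_of_eq ?_)
          rw [← Real.exp_nat_mul, ← Real.exp_add]
          congr 1
          ring
        calc ∑ k ∈ R, prTx W rate Pd p _
            ≤ ∑ k ∈ R, Real.exp (-((N:ℝ) * a)) := Finset.sum_le_sum hterm
          _ = (R.card : ℝ) * Real.exp (-((N:ℝ) * a)) := by
              rw [Finset.sum_const, nsmul_eq_mul]
          _ ≤ (M:ℝ) * Real.exp (-((N:ℝ) * a)) := by
              refine mul_le_mul_of_nonneg_right ?_ (le_of_lt (Real.exp_pos _))
              have : R.card ≤ M := by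
                calc R.card ≤ (Finset.univ : Finset (Fin M)).card := Finset.card_le_univ R
                  _ = M := by rw [Finset.card_univ, Fintype.card_fin]
              exact_mod_cast this
    -- positivity and upper bound of Pes
    have hk₀ : k₀ ∉ R := (Finset.mem_sdiff.1 hk₀m).2
    set ov : ℝ := ∑ y' : 𝓨, QWy W (Pd i₀) y' * QWy W (Pd k₀) y' with hov
    have hPespos : ∀ N : ℕ, 0 < Pes W N rate Pd R (decoder W rate Pd R N) := by
      intro N
      have h2 := Pes_pos_of_overlap hW hPd hrate R hi₀ hk₀ hovpos N (decoder W rate Pd R N)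
      have h3 : (0:ℝ) < ov ^ N := pow_pos hovpos N
      linarith
    -- coboundedness
    have hcobdd : Filter.IsCoboundedUnder (· ≥ ·) Filter.atTop
        (fun N : ℕ => -(1 / (N : ℝ)) * Real.log (Pes W N rate Pd R (decoder W rate Pd R N))) := by
      refine Filter.isCoboundedUnder_ge_of_eventually_le Filter.atTop
        (x := -Real.log ov + Real.log 2) ?_
      filter_upwards [Filter.eventually_ge_atTop 1] with N hN
      have hNR : (0:ℝ) < (N:ℝ) := by exact_mod_cast hN
      have h2 := Pes_pos_of_overlap hW hPd hrate R hi₀ hk₀ hovpos N (decoder W rate Pd R N)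
      have hlow : ov ^ N / 2 ≤ Pes W N rate Pd R (decoder W rate Pd R N) := by linarith
      have hlogle : Real.log (ov ^ N / 2)
          ≤ Real.log (Pes W N rate Pd R (decoder W rate Pd R N)) :=
        Real.log_le_log (by positivity) hlow
      have hlogeq : Real.log (ov ^ N / 2) = (N:ℝ) * Real.log ov - Real.log 2 := by
        rw [Real.log_div (by positivity) (by norm_num), Real.log_pow]
      rw [hlogeq] at hlogle
      have hneg : -(1 / (N:ℝ)) ≤ 0 := neg_nonpos.2 (by positivity)
      have step := mul_le_mul_of_nonpos_left hlogle hneg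
      have heq : -(1 / (N:ℝ)) * ((N:ℝ) * Real.log ov - Real.log 2)
          = -Real.log ov + (1 / (N:ℝ)) * Real.log 2 := by
        field_simp
        ring
      have hfin : (1 / (N:ℝ)) * Real.log 2 ≤ Real.log 2 := by
        have h1N : 1 / (N:ℝ) ≤ 1 := by
          rw [div_le_one hNR]
          exact_mod_cast hN
        refine mul_le_of_le_one_left (Real.log_nonneg (by norm_num)) h1N
      calc -(1 / (N:ℝ)) * Real.log (Pes W N rate Pd R (decoder W rate Pd R N))
          ≤ -(1 / (N:ℝ)) * ((N:ℝ) * Real.log ov - Real.log 2) := step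
        _ = -Real.log ov + (1 / (N:ℝ)) * Real.log 2 := heq
        _ ≤ -Real.log ov + Real.log 2 := by linarith
    -- final liminf bound
    refine le_of_forall_sub_le ?_
    intro ε hε
    set T := min (sInf S1) (sInf S2) with hTdef
    set b := T - ε with hbdef
    have hbT : b < T := by rw [hbdef]; linarith
    set a := (max b 0 + T) / 2 with hadef
    have hmax0 : (0:ℝ) ≤ max b 0 := le_max_right _ _
    have hmaxT : max b 0 < T := max_lt hbT hT
    have ha0 : 0 < a := by rw [hadef]; linarith
    have haT : a < T := by rw [hadef]; linarith
    have hba : b < a := by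
      have h1 : b ≤ max b 0 := le_max_left _ _
      have h2 : max b 0 < a := by rw [hadef]; linarith
      linarith
    refine Filter.le_liminf_of_le hcobdd ?_
    filter_upwards [Filter.eventually_ge_atTop
      (max 1 (⌈Real.log M / (a - b)⌉₊ + 1))] with N hN
    have hN1 : 1 ≤ N := le_trans (le_max_left _ _) hN
    have hNR : (0:ℝ) < (N:ℝ) := by exact_mod_cast hN1
    have hkey := KEY a ha0 haT N
    have hlog : Real.log (Pes W N rate Pd R (decoder W rate Pd R N))
        ≤ Real.log M - (N:ℝ) * a := by
      have h1 := Real.log_le_log (hPespos N) hkey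
      rw [Real.log_mul (by linarith : (M:ℝ) ≠ 0) (Real.exp_ne_zero _),
        Real.log_exp] at h1
      linarith
    have hneg : -(1 / (N:ℝ)) ≤ 0 := neg_nonpos.2 (by positivity)
    have step := mul_le_mul_of_nonpos_left hlog hneg
    have heq : -(1 / (N:ℝ)) * (Real.log M - (N:ℝ) * a)
        = a - Real.log M / (N:ℝ) := by
      field_simp
      ring
    have hNceil : Real.log M / (a - b) ≤ (N:ℝ) := by
      have h1 : (⌈Real.log M / (a - b)⌉₊ + 1 : ℕ) ≤ N := le_trans (le_max_right _ _) hN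
      have h2 : Real.log M / (a - b) ≤ (⌈Real.log M / (a - b)⌉₊ : ℝ) := Nat.le_ceil _
      have h3 : ((⌈Real.log M / (a - b)⌉₊ : ℕ) : ℝ) ≤ (N:ℝ) := by
        exact_mod_cast le_trans (Nat.le_succ _) h1
      linarith
    have hdiv : Real.log M / (N:ℝ) ≤ a - b := by
      rw [div_le_iff₀ hNR]
      have hab : (0:ℝ) < a - b := by linarith
      have := (div_le_iff₀ hab).1 hNceil
      linarith
    calc b = a - (a - b) := by ring
      _ ≤ a - Real.log M / (N:ℝ) := by linarith
      _ = -(1 / (N:ℝ)) * (Real.log M - (N:ℝ) * a) := heq.symm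
      _ ≤ -(1 / (N:ℝ)) * Real.log (Pes W N rate Pd R (decoder W rate Pd R N)) := step
end
end

section
/- Gallager-type bound for random access codebooks (Step 1 of the proof of Theorem 1). Let P and Q be probability distributions on 𝒳, let L ≥ 1 be an integer, and let N ≥ 1. Let X, X̃_1,…,X̃_L be mutually independent random vectors in 𝒳^N, where the N components of X are i.i.d. with distribution P and, for each w, the N components of X̃_w are i.i.d. with distribution Q; conditionally on (X, X̃_1,…,X̃_L), let Y ∈ 𝒴^N have distribution W^N(·|X). Then for every ρ ∈ (0,1] and s ∈ (0,1]: Pr{ ∃ w ∈ {1,…,L} : W^N(Y|X) ≤ W^N(Y|X̃_w) } ≤ L^ρ · ( Σ_{Y∈𝒴} (Σ_{X∈𝒳} P(X) W(Y|X)^{1−s}) (Σ_{X∈𝒳} Q(X) W(Y|X)^{s/ρ})^ρ )^N. -/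
open scoped BigOperators Classical

noncomputable section

lemma aux_sum_prod {ι V : Type*} [Fintype ι] [Fintype V] [inst : Fintype (ι → V)]
    (f : ι → V → ℝ) :
    ∑ g : ι → V, ∏ i, f i (g i) = ∏ i, ∑ v, f i v := by
  classical
  cases Subsingleton.elim inst (Pi.instFintype)
  exact (Fintype.prod_sum _).symm

lemma aux_jensen {ι : Type*} [Fintype ι] (w t : ι → ℝ) (hw : ∀ i, 0 ≤ w i)
    (hw' : ∑ i, w i = 1) (ht : ∀ i, 0 ≤ t i) {ρ : ℝ} (hρ0 : 0 < ρ) (hρ1 : ρ ≤ 1) :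
    ∑ i, w i * t i ^ ρ ≤ (∑ i, w i * t i) ^ ρ := by
  have hp : (1:ℝ) ≤ 1/ρ := by rw [le_div_iff₀ hρ0]; linarith
  have h := Real.arith_mean_le_rpow_mean Finset.univ w (fun i => t i ^ ρ)
    (fun i _ => hw i) hw' (fun i _ => Real.rpow_nonneg (ht i) ρ) hp
  have h2 : ∀ i : ι, (t i ^ ρ) ^ (1/ρ) = t i := by
    intro i
    rw [← Real.rpow_mul (ht i), mul_one_div, div_self hρ0.ne', Real.rpow_one]
  simp only [h2, one_div_one_div] at h
  exact h

lemma aux_extract {ι V : Type*} [Fintype ι] [Fintype V] [inst : Fintype (ι → V)]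
    (q r : V → ℝ) (hq : ∑ v, q v = 1) (w : ι) :
    ∑ g : ι → V, (∏ i, q (g i)) * r (g w) = ∑ v, q v * r v := by
  classical
  cases Subsingleton.elim inst (Pi.instFintype)
  have h : ∀ g : ι → V, (∏ i, q (g i)) * r (g w)
      = ∏ i, (q (g i) * if i = w then r (g i) else 1) := by
    intro g
    rw [Finset.prod_mul_distrib, Finset.prod_ite_eq' Finset.univ w (fun i => r (g i))]
    simp
  calc ∑ g : ι → V, (∏ i, q (g i)) * r (g w)
      = ∑ g : ι → V, ∏ i, (q (g i) * if i = w then r (g i) else 1) := by simp_rw [h]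
    _ = ∏ i, ∑ v, (q v * if i = w then r v else 1) :=
        aux_sum_prod fun i v => q v * if i = w then r v else 1
    _ = ∑ v, q v * r v := ?_
  have h2 : ∀ i : ι, (∑ v, q v * if i = w then r v else 1)
      = if i = w then ∑ v, q v * r v else 1 := by
    intro i
    split_ifs with hh <;> simp [hq]
  simp_rw [h2]
  rw [Finset.prod_ite_eq' Finset.univ w (fun _ => ∑ v, q v * r v)]
  simp

/-- Gallager-type bound for random access codebooks
(Step 1 of the proof of Theorem 1). -/
theorem stmt4 {𝓧 𝓨 : Type*} [Fintype 𝓧] [Fintype 𝓨] [Nonempty 𝓧] [Nonempty 𝓨]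
    (W : 𝓧 → 𝓨 → ℝ) (hW : IsDMC W)
    (P Q : 𝓧 → ℝ) (hP : IsDist P) (hQ : IsDist Q)
    (L N : ℕ) (hL : 1 ≤ L) (hN : 1 ≤ N)
    (ρ s : ℝ) (hρ : ρ ∈ Set.Ioc (0:ℝ) 1) (hs : s ∈ Set.Ioc (0:ℝ) 1) :
    (∑ x : Fin N → 𝓧, ∑ xt : Fin L → Fin N → 𝓧, ∑ y : Fin N → 𝓨,
        (∏ j, P (x j)) * (∏ w, ∏ j, Q (xt w j)) * Wn W x y *
          (if ∃ w, Wn W x y ≤ Wn W (xt w) y then (1:ℝ) else 0))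
      ≤ (L : ℝ) ^ ρ *
        (∑ y : 𝓨, (∑ x : 𝓧, P x * W x y ^ (1 - s)) *
            (∑ x : 𝓧, Q x * W x y ^ (s / ρ)) ^ ρ) ^ N := by
  obtain ⟨hρ0, hρ1⟩ := hρ
  obtain ⟨hs0, hs1⟩ := hs
  obtain ⟨hW0, hW1⟩ := hW
  obtain ⟨hP0, hP1⟩ := hP
  obtain ⟨hQ0, hQ1⟩ := hQ
  have hWn0 : ∀ (x : Fin N → 𝓧) (y : Fin N → 𝓨), 0 ≤ Wn W x y :=
    fun x y => Finset.prod_nonneg fun j _ => hW0 _ _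
  have hPn0 : ∀ x : Fin N → 𝓧, 0 ≤ ∏ j, P (x j) :=
    fun x => Finset.prod_nonneg fun j _ => hP0 _
  have hQn0 : ∀ x : Fin N → 𝓧, 0 ≤ ∏ j, Q (x j) :=
    fun x => Finset.prod_nonneg fun j _ => hQ0 _
  have hQnsum : ∑ x : Fin N → 𝓧, ∏ j, Q (x j) = 1 := by
    rw [aux_sum_prod fun (_ : Fin N) a => Q a]; simp [hQ1]
  have hsρ : 0 < s / ρ := div_pos hs0 hρ0
  set S : (Fin N → 𝓨) → ℝ :=
    fun y => ∑ x' : Fin N → 𝓧, (∏ j, Q (x' j)) * Wn W x' y ^ (s/ρ) with hSdef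
  have hS0 : ∀ y, 0 ≤ S y := fun y => Finset.sum_nonneg fun x' _ =>
    mul_nonneg (hQn0 x') (Real.rpow_nonneg (hWn0 x' y) _)
  have hB0 : ∀ b : 𝓨, 0 ≤ ∑ a, Q a * W a b ^ (s/ρ) := fun b =>
    Finset.sum_nonneg fun a _ => mul_nonneg (hQ0 a) (Real.rpow_nonneg (hW0 a b) _)
  -- key pointwise bound
  have key : ∀ (x : Fin N → 𝓧) (y : Fin N → 𝓨),
      Wn W x y * (∑ xt : Fin L → Fin N → 𝓧, (∏ w, ∏ j, Q (xt w j)) *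
          (if ∃ w, Wn W x y ≤ Wn W (xt w) y then (1:ℝ) else 0))
        ≤ (L:ℝ)^ρ * (Wn W x y ^ (1-s) * S y ^ ρ) := by
    intro x y
    rcases eq_or_lt_of_le (hWn0 x y) with h0 | hv
    · rw [← h0, zero_mul]
      exact mul_nonneg (Real.rpow_nonneg (Nat.cast_nonneg L) _)
        (mul_nonneg (Real.rpow_nonneg (h0 ▸ le_rfl) _) (Real.rpow_nonneg (hS0 y) _))
    · set v := Wn W x y with hvdef
      have hvs : (0:ℝ) < v ^ s := Real.rpow_pos_of_pos hv s
      have hT0 : ∀ xt : Fin L → Fin N → 𝓧,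
          0 ≤ ∑ w, (Wn W (xt w) y / v) ^ (s/ρ) := fun xt =>
        Finset.sum_nonneg fun w _ =>
          Real.rpow_nonneg (div_nonneg (hWn0 _ _) hv.le) _
      have ind_le : ∀ xt : Fin L → Fin N → 𝓧,
          (if ∃ w, v ≤ Wn W (xt w) y then (1:ℝ) else 0)
            ≤ (∑ w, (Wn W (xt w) y / v) ^ (s/ρ)) ^ ρ := by
        intro xt
        split_ifs with h
        · obtain ⟨w, hw⟩ := h
          have h1 : (1:ℝ) ≤ (Wn W (xt w) y / v) ^ (s/ρ) := by
            have hd : (1:ℝ) ≤ Wn W (xt w) y / v := (one_le_div hv).2 hw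
            calc (1:ℝ) = 1 ^ (s/ρ) := (Real.one_rpow _).symm
              _ ≤ _ := Real.rpow_le_rpow zero_le_one hd hsρ.le
          have h2 : (1:ℝ) ≤ ∑ w', (Wn W (xt w') y / v) ^ (s/ρ) :=
            h1.trans (Finset.single_le_sum
              (fun w' _ => Real.rpow_nonneg (div_nonneg (hWn0 _ _) hv.le) _)
              (Finset.mem_univ w))
          calc (1:ℝ) = 1 ^ ρ := (Real.one_rpow _).symm
            _ ≤ _ := Real.rpow_le_rpow zero_le_one h2 hρ0.le
        · exact Real.rpow_nonneg (hT0 xt) ρ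
      have hQLn0 : ∀ xt : Fin L → Fin N → 𝓧, 0 ≤ ∏ w, ∏ j, Q (xt w j) :=
        fun xt => Finset.prod_nonneg fun w _ => hQn0 _
      have hQLsum : ∑ xt : Fin L → Fin N → 𝓧, ∏ w, ∏ j, Q (xt w j) = 1 := by
        rw [aux_sum_prod fun (_ : Fin L) (x' : Fin N → 𝓧) => ∏ j, Q (x' j)]
        simp [hQnsum]
      have step1 : (∑ xt : Fin L → Fin N → 𝓧, (∏ w, ∏ j, Q (xt w j)) *
          (if ∃ w, v ≤ Wn W (xt w) y then (1:ℝ) else 0))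
          ≤ ∑ xt : Fin L → Fin N → 𝓧, (∏ w, ∏ j, Q (xt w j)) *
              (∑ w, (Wn W (xt w) y / v) ^ (s/ρ)) ^ ρ :=
        Finset.sum_le_sum fun xt _ =>
          mul_le_mul_of_nonneg_left (ind_le xt) (hQLn0 xt)
      have step2 : (∑ xt : Fin L → Fin N → 𝓧, (∏ w, ∏ j, Q (xt w j)) *
              (∑ w, (Wn W (xt w) y / v) ^ (s/ρ)) ^ ρ)
          ≤ (∑ xt : Fin L → Fin N → 𝓧, (∏ w, ∏ j, Q (xt w j)) *
              (∑ w, (Wn W (xt w) y / v) ^ (s/ρ))) ^ ρ :=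
        aux_jensen _ _ hQLn0 hQLsum hT0 hρ0 hρ1
      have step3 : (∑ xt : Fin L → Fin N → 𝓧, (∏ w, ∏ j, Q (xt w j)) *
              (∑ w, (Wn W (xt w) y / v) ^ (s/ρ)))
          = (L:ℝ) * (S y / v ^ (s/ρ)) := by
        have e1 : ∀ xt : Fin L → Fin N → 𝓧, (∏ w, ∏ j, Q (xt w j)) *
              (∑ w, (Wn W (xt w) y / v) ^ (s/ρ))
            = ∑ w, (∏ w', ∏ j, Q (xt w' j)) * (Wn W (xt w) y / v) ^ (s/ρ) := by
          intro xt; rw [Finset.mul_sum]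
        simp_rw [e1]
        rw [Finset.sum_comm]
        have e2 : ∀ w : Fin L, (∑ xt : Fin L → Fin N → 𝓧,
              (∏ w', ∏ j, Q (xt w' j)) * (Wn W (xt w) y / v) ^ (s/ρ))
            = ∑ x' : Fin N → 𝓧, (∏ j, Q (x' j)) * (Wn W x' y / v) ^ (s/ρ) := by
          intro w
          exact aux_extract (fun x' : Fin N → 𝓧 => ∏ j, Q (x' j))
            (fun x' : Fin N → 𝓧 => (Wn W x' y / v) ^ (s/ρ)) hQnsum w
        simp_rw [e2]
        rw [Finset.sum_const, Finset.card_univ, Fintype.card_fin, nsmul_eq_mul]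
        congr 1
        have e3 : ∀ x' : Fin N → 𝓧, (Wn W x' y / v) ^ (s/ρ)
            = Wn W x' y ^ (s/ρ) / v ^ (s/ρ) := fun x' =>
          Real.div_rpow (hWn0 x' y) hv.le _
        simp_rw [e3, hSdef]
        rw [eq_div_iff (Real.rpow_pos_of_pos hv (s/ρ)).ne', Finset.sum_mul]
        refine Finset.sum_congr rfl fun x' _ => ?_
        rw [mul_assoc, div_mul_cancel₀ _ (Real.rpow_pos_of_pos hv (s/ρ)).ne']
      have crpow : ((L:ℝ) * (S y / v ^ (s/ρ))) ^ ρ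
          = (L:ℝ)^ρ * (S y ^ ρ / v ^ s) := by
        rw [Real.mul_rpow (Nat.cast_nonneg L)
            (div_nonneg (hS0 y) (Real.rpow_nonneg hv.le _)),
          Real.div_rpow (hS0 y) (Real.rpow_nonneg hv.le _),
          ← Real.rpow_mul hv.le, div_mul_cancel₀ s hρ0.ne']
      have chain : (∑ xt : Fin L → Fin N → 𝓧, (∏ w, ∏ j, Q (xt w j)) *
            (if ∃ w, v ≤ Wn W (xt w) y then (1:ℝ) else 0))
          ≤ (L:ℝ)^ρ * (S y ^ ρ / v ^ s) := by
        rw [← crpow, ← step3]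
        exact step1.trans step2
      calc v * (∑ xt : Fin L → Fin N → 𝓧, (∏ w, ∏ j, Q (xt w j)) *
              (if ∃ w, v ≤ Wn W (xt w) y then (1:ℝ) else 0))
          ≤ v * ((L:ℝ)^ρ * (S y ^ ρ / v ^ s)) :=
            mul_le_mul_of_nonneg_left chain hv.le
        _ = (L:ℝ)^ρ * (v ^ (1-s) * S y ^ ρ) := by
            have hv1s : v ^ (1-s) = v / v ^ s := by
              rw [Real.rpow_sub hv, Real.rpow_one]
            rw [hv1s]
            field_simp
  -- rearrange the LHS
  have rearr : (∑ x : Fin N → 𝓧, ∑ xt : Fin L → Fin N → 𝓧, ∑ y : Fin N → 𝓨,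
        (∏ j, P (x j)) * (∏ w, ∏ j, Q (xt w j)) * Wn W x y *
          (if ∃ w, Wn W x y ≤ Wn W (xt w) y then (1:ℝ) else 0))
      = ∑ x : Fin N → 𝓧, ∑ y : Fin N → 𝓨, (∏ j, P (x j)) *
          (Wn W x y * ∑ xt : Fin L → Fin N → 𝓧, (∏ w, ∏ j, Q (xt w j)) *
            (if ∃ w, Wn W x y ≤ Wn W (xt w) y then (1:ℝ) else 0)) := by
    refine Finset.sum_congr rfl fun x _ => ?_
    rw [Finset.sum_comm]
    refine Finset.sum_congr rfl fun y _ => ?_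
    rw [Finset.mul_sum, Finset.mul_sum]
    exact Finset.sum_congr rfl fun xt _ => by ring
  have bound : (∑ x : Fin N → 𝓧, ∑ y : Fin N → 𝓨, (∏ j, P (x j)) *
          (Wn W x y * ∑ xt : Fin L → Fin N → 𝓧, (∏ w, ∏ j, Q (xt w j)) *
            (if ∃ w, Wn W x y ≤ Wn W (xt w) y then (1:ℝ) else 0)))
      ≤ ∑ x : Fin N → 𝓧, ∑ y : Fin N → 𝓨, (∏ j, P (x j)) *
          ((L:ℝ)^ρ * (Wn W x y ^ (1-s) * S y ^ ρ)) :=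
    Finset.sum_le_sum fun x _ => Finset.sum_le_sum fun y _ =>
      mul_le_mul_of_nonneg_left (key x y) (hPn0 x)
  -- factorization
  have hx : ∀ y : Fin N → 𝓨, (∑ x : Fin N → 𝓧, (∏ j, P (x j)) * Wn W x y ^ (1-s))
      = ∏ j, ∑ a, P a * W a (y j) ^ (1-s) := by
    intro y
    rw [← aux_sum_prod fun (j : Fin N) (a : 𝓧) => P a * W a (y j) ^ (1-s)]
    refine Finset.sum_congr rfl fun x _ => ?_
    rw [Wn, ← Real.finset_prod_rpow _ _ (fun j _ => hW0 _ _) _,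
      Finset.prod_mul_distrib]
  have hSy : ∀ y : Fin N → 𝓨, S y = ∏ j, ∑ a, Q a * W a (y j) ^ (s/ρ) := by
    intro y
    rw [hSdef, ← aux_sum_prod fun (j : Fin N) (a : 𝓧) => Q a * W a (y j) ^ (s/ρ)]
    refine Finset.sum_congr rfl fun x' _ => ?_
    rw [Wn, ← Real.finset_prod_rpow _ _ (fun j _ => hW0 _ _) _,
      Finset.prod_mul_distrib]
  have percol : ∀ y : Fin N → 𝓨, (∑ x : Fin N → 𝓧, (∏ j, P (x j)) *
        ((L:ℝ)^ρ * (Wn W x y ^ (1-s) * S y ^ ρ)))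
      = (L:ℝ)^ρ * ∏ j, ((∑ a, P a * W a (y j) ^ (1-s)) *
          (∑ a, Q a * W a (y j) ^ (s/ρ)) ^ ρ) := by
    intro y
    have e1 : ∀ x : Fin N → 𝓧, (∏ j, P (x j)) *
          ((L:ℝ)^ρ * (Wn W x y ^ (1-s) * S y ^ ρ))
        = (L:ℝ)^ρ * (((∏ j, P (x j)) * Wn W x y ^ (1-s)) * S y ^ ρ) :=
      fun x => by ring
    simp_rw [e1, ← Finset.mul_sum, ← Finset.sum_mul, hx y]
    congr 1
    rw [hSy y, ← Real.finset_prod_rpow _ _ (fun j _ => hB0 _) ρ,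
      ← Finset.prod_mul_distrib]
  have facto : (∑ x : Fin N → 𝓧, ∑ y : Fin N → 𝓨, (∏ j, P (x j)) *
          ((L:ℝ)^ρ * (Wn W x y ^ (1-s) * S y ^ ρ)))
      = (L:ℝ)^ρ * (∑ b : 𝓨, (∑ a, P a * W a b ^ (1-s)) *
          (∑ a, Q a * W a b ^ (s/ρ)) ^ ρ) ^ N := by
    rw [Finset.sum_comm]
    simp_rw [percol]
    rw [← Finset.mul_sum]
    congr 1
    rw [aux_sum_prod fun (j : Fin N) (b : 𝓨) =>
      (∑ a, P a * W a b ^ (1-s)) * (∑ a, Q a * W a b ^ (s/ρ)) ^ ρ]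
    simp [Finset.prod_const]
  have final := rearr.trans_le (bound.trans_eq facto)
  refine le_trans (le_of_eq ?_) final
  congr!
end
end

section
/- Existence of a typicality threshold balancing atypicality and false-acceptance probabilities (Steps 2–4 of the proof of Theorem 1). Let P and Q be probability distributions on 𝒳, L ≥ 1 an integer, N ≥ 1, ρ ∈ (0,1), s ∈ (0,1−ρ). Set B = Σ_{Y∈𝒴} (Σ_{X∈𝒳} P(X) W(Y|X)^{s/(s+ρ)})^{s+ρ} (Σ_{X∈𝒳} Q(X) W(Y|X))^{1−s}. Then there exists a function τ : 𝒴^N → ℝ such that both of the following hold. (a) If X ∈ 𝒳^N has i.i.d. components with distribution P and, given X, Y has distribution W^N(·|X), then Pr{ W^N(Y|X) ≤ e^{−N τ(Y)} } ≤ L^ρ · B^N. (b) If X̃, X_1,…,X_L are mutually independent random vectors in 𝒳^N with the components of X̃ i.i.d. with distribution Q and the components of each X_w i.i.d. with distribution P, and given all of them Y has distribution W^N(·|X̃), then Pr{ ∃ w ∈ {1,…,L} : W^N(Y|X_w) > e^{−N τ(Y)} } ≤ L^ρ · B^N. -/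
open scoped BigOperators Classical

noncomputable section

/-- Core single-shot threshold lemma. -/
lemma core_threshold {ι : Type*} [Fintype ι] (π w : ι → ℝ)
    (hπ0 : ∀ i, 0 ≤ π i) (hπ1 : ∑ i, π i = 1)
    (hw0 : ∀ i, 0 ≤ w i) (hw1 : ∀ i, w i ≤ 1)
    (b Lr ρ s : ℝ) (hb : 0 ≤ b) (hL : 1 ≤ Lr)
    (hρ0 : 0 < ρ) (hρ1 : ρ < 1) (hs0 : 0 < s) (hs1 : s < 1 - ρ) :
    ∃ T : ℝ, 0 < T ∧
      (∑ i, π i * w i * (if w i ≤ T then (1:ℝ) else 0))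
        ≤ Lr ^ ρ * (∑ i, π i * w i ^ (s/(s+ρ))) ^ (s+ρ) * b ^ (1-s) ∧
      b * min 1 (Lr * ∑ i, π i * (if T < w i then (1:ℝ) else 0))
        ≤ Lr ^ ρ * (∑ i, π i * w i ^ (s/(s+ρ))) ^ (s+ρ) * b ^ (1-s) := by
  have hsρ : 0 < s + ρ := by linarith
  set v := s/(s+ρ) with hv
  have hv0 : 0 < v := div_pos hs0 hsρ
  have hv1 : v < 1 := by rw [hv, div_lt_one hsρ]; linarith
  have h1v : 1 - v = ρ/(s+ρ) := by rw [hv]; field_simp; ring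
  set a := ∑ i, π i * w i ^ v with hadef
  have ha0 : 0 ≤ a := Finset.sum_nonneg fun i _ =>
    mul_nonneg (hπ0 i) (Real.rpow_nonneg (hw0 i) v)
  have hL0 : (0:ℝ) < Lr := lt_of_lt_of_le one_pos hL
  set R := Lr ^ ρ * a ^ (s+ρ) * b ^ (1-s) with hR
  have hR0 : 0 ≤ R := by
    apply mul_nonneg (mul_nonneg _ _) _
    · exact Real.rpow_nonneg hL0.le ρ
    · exact Real.rpow_nonneg ha0 _
    · exact Real.rpow_nonneg hb _
  obtain ⟨Tm, hTm0, hTmz⟩ : ∃ T : ℝ, 0 < T ∧ ∀ i, w i ≤ T → w i = 0 := by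
    by_cases hS : (Finset.univ.filter fun i => 0 < w i).Nonempty
    · obtain ⟨i0, hi0, hmin⟩ := Finset.exists_min_image _ w hS
      have h0 : 0 < w i0 := (Finset.mem_filter.mp hi0).2
      refine ⟨w i0 / 2, by linarith, fun i hle => ?_⟩
      by_contra hne
      have hpos : 0 < w i := lt_of_le_of_ne (hw0 i) (Ne.symm hne)
      have := hmin i (Finset.mem_filter.mpr ⟨Finset.mem_univ i, hpos⟩)
      linarith
    · refine ⟨1, one_pos, fun i _ => ?_⟩
      by_contra hne
      exact hS ⟨i, Finset.mem_filter.mpr ⟨Finset.mem_univ i,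
        lt_of_le_of_ne (hw0 i) (Ne.symm hne)⟩⟩
  by_cases hc : 0 < a ∧ Lr ^ ρ * a ^ (s+ρ) < b ^ s
  · -- main case
    obtain ⟨ha, hab⟩ := hc
    have hbpos : 0 < b := by
      by_contra h
      have hb0 : b = 0 := le_antisymm (not_lt.mp h) hb
      rw [hb0, Real.zero_rpow (ne_of_gt hs0)] at hab
      have h2 : 0 ≤ Lr ^ ρ * a ^ (s+ρ) :=
        mul_nonneg (Real.rpow_nonneg hL0.le ρ) (Real.rpow_nonneg ha0 _)
      linarith
    set la := Real.log a with hla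
    set lb := Real.log b with hlb
    set lL := Real.log Lr with hlL
    have hlL0 : 0 ≤ lL := Real.log_nonneg hL
    set lδ := (ρ-1)*lL + (s+ρ)*la - s*lb with hlδ
    set δ := Real.exp lδ with hδdef
    have hδ0 : 0 < δ := Real.exp_pos _
    set T0 := Real.exp (((s+ρ)/s) * (la - lδ)) with hT0def
    have hT00 : 0 < T0 := Real.exp_pos _
    set T := min 1 T0 with hTdef
    have hT0 : 0 < T := lt_min one_pos hT00
    have hae : a = Real.exp la := (Real.exp_log ha).symm
    have hbe : b = Real.exp lb := (Real.exp_log hbpos).symm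
    have hLe : Lr = Real.exp lL := (Real.exp_log hL0).symm
    have hRe : R = Real.exp (ρ*lL + (s+ρ)*la + (1-s)*lb) := by
      rw [hR, Real.rpow_def_of_pos hL0, Real.rpow_def_of_pos ha,
        Real.rpow_def_of_pos hbpos, ← Real.exp_add, ← Real.exp_add]
      ring_nf
      congr 1
      rw [hlL, hla, hlb]; ring
    have h1 : ρ*lL + (s+ρ)*la ≤ s*lb := by
      have h := hab
      rw [Real.rpow_def_of_pos hL0, Real.rpow_def_of_pos ha,
        Real.rpow_def_of_pos hbpos, ← Real.exp_add] at h
      have h2 := (Real.exp_lt_exp.mp h).le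
      linarith
    have hp : (∑ i, π i * (if T < w i then (1:ℝ) else 0)) ≤ δ := by
      rcases le_or_gt T0 1 with hT01 | hT01
      · have hTT : T = T0 := min_eq_right hT01
        have hT0v : T0 ^ v = a / δ := by
          rw [hT0def, Real.rpow_def_of_pos (Real.exp_pos _), Real.log_exp,
            hae, hδdef, ← Real.exp_sub]
          congr 1
          rw [hv]
          field_simp
        have hsum : (∑ i, π i * (if T < w i then (1:ℝ) else 0)) * (a/δ) ≤ a := by
          calc (∑ i, π i * (if T < w i then (1:ℝ) else 0)) * (a/δ)
              = ∑ i, (π i * (if T < w i then (1:ℝ) else 0)) * (a/δ) :=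
                Finset.sum_mul _ _ _
            _ ≤ ∑ i, π i * w i ^ v := by
                apply Finset.sum_le_sum
                intro i _
                by_cases hiw : T < w i
                · simp only [hiw, if_true, mul_one]
                  rw [← hT0v]
                  apply mul_le_mul_of_nonneg_left _ (hπ0 i)
                  apply Real.rpow_le_rpow hT00.le _ hv0.le
                  rw [← hTT]; exact hiw.le
                · simp only [hiw, if_false, mul_zero, zero_mul]
                  exact mul_nonneg (hπ0 i) (Real.rpow_nonneg (hw0 i) v)
            _ = a := hadef.symm
        have haδ : 0 < a/δ := div_pos ha hδ0
        have h3 := (le_div_iff₀ haδ).mpr hsum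
        have hfin : a / (a/δ) = δ := by field_simp
        linarith [hfin ▸ h3]
      · have hTT : T = 1 := min_eq_left hT01.le
        have hz : (∑ i, π i * (if T < w i then (1:ℝ) else 0)) = 0 := by
          apply Finset.sum_eq_zero
          intro i _
          have hni : ¬ (T < w i) := by rw [hTT]; exact not_lt.mpr (hw1 i)
          simp [hni]
        rw [hz]; exact hδ0.le
    have hii : b * min 1 (Lr * ∑ i, π i * (if T < w i then (1:ℝ) else 0)) ≤ R := by
      have h2 : min 1 (Lr * ∑ i, π i * (if T < w i then (1:ℝ) else 0)) ≤ Lr * δ :=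
        le_trans (min_le_right _ _) (mul_le_mul_of_nonneg_left hp hL0.le)
      calc b * min 1 (Lr * ∑ i, π i * (if T < w i then (1:ℝ) else 0))
          ≤ b * (Lr * δ) := mul_le_mul_of_nonneg_left h2 hbpos.le
        _ = R := by
            rw [hRe, hbe, hLe, hδdef, ← Real.exp_add, ← Real.exp_add]
            congr 1
            rw [hlδ]; ring
    refine ⟨T, hT0, ?_, hii⟩
    have hFb : (∑ i, π i * w i * (if w i ≤ T then (1:ℝ) else 0)) ≤ T ^ (1-v) * a := by
      rw [hadef, Finset.mul_sum]
      apply Finset.sum_le_sum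
      intro i _
      by_cases hiw : w i ≤ T
      · simp only [hiw, if_true, mul_one]
        rcases eq_or_lt_of_le (hw0 i) with h0 | h0
        · rw [← h0, mul_zero]
          exact mul_nonneg (Real.rpow_nonneg hT0.le _)
            (mul_nonneg (hπ0 i) (Real.rpow_nonneg le_rfl v))
        · have hone : v + (1-v) = 1 := by ring
          have hsplit : w i = w i ^ v * w i ^ (1-v) := by
            rw [← Real.rpow_add h0, hone, Real.rpow_one]
          calc π i * w i = π i * (w i ^ v * w i ^ (1-v)) := by rw [← hsplit]
            _ ≤ π i * (w i ^ v * T ^ (1-v)) := by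
                apply mul_le_mul_of_nonneg_left _ (hπ0 i)
                apply mul_le_mul_of_nonneg_left _ (Real.rpow_nonneg (hw0 i) v)
                exact Real.rpow_le_rpow h0.le hiw (by linarith)
            _ = T ^ (1-v) * (π i * w i ^ v) := by ring
      · simp only [hiw, if_false, mul_zero]
        exact mul_nonneg (Real.rpow_nonneg hT0.le _)
          (mul_nonneg (hπ0 i) (Real.rpow_nonneg (hw0 i) v))
    refine le_trans hFb ?_
    rcases le_or_gt T0 1 with hT01 | hT01
    · have hTT : T = T0 := min_eq_right hT01
      have hTe : T0 ^ (1-v) * a = Real.exp ((ρ/s)*(la - lδ) + la) := by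
        rw [hT0def, Real.rpow_def_of_pos (Real.exp_pos _), Real.log_exp, hae,
          ← Real.exp_add]
        congr 1
        rw [h1v]
        field_simp
      rw [hTT, hTe, hRe]
      apply Real.exp_le_exp.mpr
      have key : 0 ≤ (1-s-ρ) * (s*lb - (ρ*lL + (s+ρ)*la)) :=
        mul_nonneg (by linarith) (by linarith)
      have hcomb : s*(ρ*lL + (s+ρ)*la + (1-s)*lb) - s*((ρ/s)*(la - lδ) + la)
          = (1-s-ρ) * (s*lb - (ρ*lL + (s+ρ)*la)) := by
        rw [hlδ]
        field_simp
        ring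
      have hs' : s*((ρ/s)*(la - lδ) + la) ≤ s*(ρ*lL + (s+ρ)*la + (1-s)*lb) := by
        linarith [key, hcomb]
      exact le_of_mul_le_mul_left hs' hs0
    · have hTT : T = 1 := min_eq_left hT01.le
      rw [hTT, Real.one_rpow, one_mul]
      have hδa : lδ ≤ la := by
        by_contra hcon
        push_neg at hcon
        have hneg : ((s+ρ)/s) * (la - lδ) < 0 :=
          mul_neg_of_pos_of_neg (div_pos hsρ hs0) (by linarith)
        have hlt : T0 < 1 := by
          rw [hT0def, ← Real.exp_zero]
          exact Real.exp_lt_exp.mpr hneg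
        linarith
      rcases le_total 1 (Lr * a) with hLa | hLa
      · have h0 : 0 ≤ lL + la := by
          have h2 : 0 ≤ Real.log (Lr * a) := Real.log_nonneg hLa
          rwa [Real.log_mul (ne_of_gt hL0) (ne_of_gt ha)] at h2
        rw [hae, hRe]
        apply Real.exp_le_exp.mpr
        have key1 : 0 ≤ (1-s) * (s*lb - (ρ*lL + (s+ρ)*la)) :=
          mul_nonneg (by linarith) (by linarith)
        have key2 : 0 ≤ ρ * (lL + la) := mul_nonneg hρ0.le h0
        have hcomb : s*(ρ*lL + (s+ρ)*la + (1-s)*lb) - s*la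
            = (1-s) * (s*lb - (ρ*lL + (s+ρ)*la)) + ρ*(lL+la) := by ring
        have hs' : s*la ≤ s*(ρ*lL + (s+ρ)*la + (1-s)*lb) := by
          linarith [key1, key2, hcomb]
        exact le_of_mul_le_mul_left hs' hs0
      · have h0 : lL + la ≤ 0 := by
          have h2 : Real.log (Lr * a) ≤ 0 :=
            Real.log_nonpos (by positivity) hLa
          rwa [Real.log_mul (ne_of_gt hL0) (ne_of_gt ha)] at h2
        rw [hae, hRe]
        apply Real.exp_le_exp.mpr
        have hδa' : (ρ-1)*lL + (s+ρ-1)*la ≤ s*lb := by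
          rw [hlδ] at hδa; linarith
        have key1 : 0 ≤ (1-s) * (s*lb - ((ρ-1)*lL + (s+ρ-1)*la)) :=
          mul_nonneg (by linarith) (by linarith)
        have key2 : 0 ≤ (1-s-ρ) * (-(lL + la)) :=
          mul_nonneg (by linarith) (by linarith)
        have hcomb : s*(ρ*lL + (s+ρ)*la + (1-s)*lb) - s*la
            = (1-s) * (s*lb - ((ρ-1)*lL + (s+ρ-1)*la)) + (1-s-ρ)*(-(lL+la)) := by
          ring
        have hs' : s*la ≤ s*(ρ*lL + (s+ρ)*la + (1-s)*lb) := by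
          linarith [key1, key2, hcomb]
        exact le_of_mul_le_mul_left hs' hs0
  · -- degenerate case
    refine ⟨Tm, hTm0, ?_, ?_⟩
    · have hz : ∀ i ∈ Finset.univ, π i * w i * (if w i ≤ Tm then (1:ℝ) else 0) = 0 := by
        intro i _
        by_cases hiw : w i ≤ Tm
        · rw [hTmz i hiw]; simp
        · simp [hiw]
      rw [Finset.sum_eq_zero hz]
      exact hR0
    · rcases not_and_or.mp hc with hna | hba
      · have ha : (∑ i, π i * w i ^ v) = 0 := by
          rw [← hadef]; exact le_antisymm (not_lt.mp hna) ha0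
        have hzero := (Finset.sum_eq_zero_iff_of_nonneg (fun i _ =>
          mul_nonneg (hπ0 i) (Real.rpow_nonneg (hw0 i) v))).mp ha
        have hpz : (∑ i, π i * (if Tm < w i then (1:ℝ) else 0)) = 0 := by
          apply Finset.sum_eq_zero
          intro i _
          by_cases h : Tm < w i
          · have hwpos : 0 < w i := lt_trans hTm0 h
            have hwv : 0 < w i ^ v := Real.rpow_pos_of_pos hwpos v
            have hπz : π i = 0 := by
              rcases mul_eq_zero.mp (hzero i (Finset.mem_univ i)) with h3 | h3
              · exact h3
              · exact absurd h3 (ne_of_gt hwv)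
            simp [h, hπz]
          · simp [h]
        rw [hpz, mul_zero]
        have hm : min (1:ℝ) 0 = 0 := min_eq_right zero_le_one
        rw [hm, mul_zero]
        exact hR0
      · have hba' : b ^ s ≤ Lr ^ ρ * a ^ (s+ρ) := not_lt.mp hba
        rcases eq_or_lt_of_le hb with h0 | h0
        · rw [← h0, zero_mul]; exact hR0
        · have hone : s + (1-s) = 1 := by ring
          have hbb : b = b ^ s * b ^ (1-s) := by
            rw [← Real.rpow_add h0, hone, Real.rpow_one]
          have hb1 : b ≤ R := by
            rw [hR]
            conv_lhs => rw [hbb]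
            exact mul_le_mul_of_nonneg_right hba' (Real.rpow_nonneg hb _)
          calc b * min 1 (Lr * ∑ i, π i * (if Tm < w i then (1:ℝ) else 0))
              ≤ b * 1 := mul_le_mul_of_nonneg_left (min_le_left _ _) hb
            _ = b := mul_one b
            _ ≤ R := hb1

lemma sum_prod_pi {α : Type*} [Fintype α] {N : ℕ} (f : Fin N → α → ℝ) :
    ∑ x : Fin N → α, ∏ j, f j (x j) = ∏ j, ∑ X, f j X := by
  rw [Finset.prod_univ_sum, ← Fintype.piFinset_univ]

/-- Existence of a typicality threshold balancing the atypicality and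
false-acceptance probabilities (Steps 2–4 of the proof of Theorem 1). -/
theorem stmt7 {𝓧 𝓨 : Type*} [Fintype 𝓧] [Fintype 𝓨] [Nonempty 𝓧] [Nonempty 𝓨]
    (W : 𝓧 → 𝓨 → ℝ) (hW : IsDMC W)
    (P Q : 𝓧 → ℝ) (hP : IsDist P) (hQ : IsDist Q)
    (L N : ℕ) (hL : 1 ≤ L) (hN : 1 ≤ N)
    (ρ s : ℝ) (hρ : ρ ∈ Set.Ioo (0:ℝ) 1) (hs : s ∈ Set.Ioo (0:ℝ) (1 - ρ)) :
    ∃ τ : (Fin N → 𝓨) → ℝ,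
      -- (a) atypicality probability bound
      (∑ x : Fin N → 𝓧, ∑ y : Fin N → 𝓨,
          (∏ j, P (x j)) * Wn W x y *
            (if Wn W x y ≤ Real.exp (-((N : ℝ) * τ y)) then (1:ℝ) else 0))
        ≤ (L : ℝ) ^ ρ *
            (∑ y : 𝓨, (∑ x : 𝓧, P x * W x y ^ (s / (s + ρ))) ^ (s + ρ) *
                (∑ x : 𝓧, Q x * W x y) ^ (1 - s)) ^ N ∧
      -- (b) false-acceptance probability bound
      (∑ xt : Fin N → 𝓧, ∑ xw : Fin L → Fin N → 𝓧, ∑ y : Fin N → 𝓨,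
          (∏ j, Q (xt j)) * (∏ w, ∏ j, P (xw w j)) * Wn W xt y *
            (if ∃ w, Real.exp (-((N : ℝ) * τ y)) < Wn W (xw w) y then (1:ℝ) else 0))
        ≤ (L : ℝ) ^ ρ *
            (∑ y : 𝓨, (∑ x : 𝓧, P x * W x y ^ (s / (s + ρ))) ^ (s + ρ) *
                (∑ x : 𝓧, Q x * W x y) ^ (1 - s)) ^ N := by
  obtain ⟨hW0, hW1⟩ := hW
  obtain ⟨hP0, hP1⟩ := hP
  obtain ⟨hQ0, hQ1⟩ := hQ
  obtain ⟨hρ0, hρ1⟩ := hρ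
  obtain ⟨hs0, hs1⟩ := hs
  have hWle1 : ∀ x y, W x y ≤ 1 := by
    intro x y
    calc W x y ≤ ∑ y', W x y' :=
          Finset.single_le_sum (fun y' _ => hW0 x y') (Finset.mem_univ y)
      _ = 1 := hW1 x
  have hLr1 : (1:ℝ) ≤ (L:ℝ) := by exact_mod_cast hL
  set aY : 𝓨 → ℝ := fun Y => ∑ X, P X * W X Y ^ (s/(s+ρ)) with haY
  set bY : 𝓨 → ℝ := fun Y => ∑ X, Q X * W X Y with hbY
  have haYnn : ∀ Y, 0 ≤ aY Y := fun Y => Finset.sum_nonneg fun X _ =>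
    mul_nonneg (hP0 X) (Real.rpow_nonneg (hW0 X Y) _)
  have hbYnn : ∀ Y, 0 ≤ bY Y := fun Y => Finset.sum_nonneg fun X _ =>
    mul_nonneg (hQ0 X) (hW0 X Y)
  set π : (Fin N → 𝓧) → ℝ := fun x => ∏ j, P (x j) with hπdef
  have hπ0 : ∀ x, 0 ≤ π x := fun x => Finset.prod_nonneg fun j _ => hP0 _
  have hπ1 : ∑ x : Fin N → 𝓧, π x = 1 := by
    rw [hπdef]
    rw [sum_prod_pi (fun _ X => P X)]
    simp [hP1]
  have hWn0 : ∀ (x : Fin N → 𝓧) (y : Fin N → 𝓨), 0 ≤ Wn W x y := fun x y =>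
    Finset.prod_nonneg fun j _ => hW0 _ _
  have hWn1 : ∀ (x : Fin N → 𝓧) (y : Fin N → 𝓨), Wn W x y ≤ 1 := fun x y =>
    Finset.prod_le_one (fun j _ => hW0 _ _) (fun j _ => hWle1 _ _)
  -- per-y tensorizations
  have hwsum : ∀ y : Fin N → 𝓨,
      (∑ x : Fin N → 𝓧, π x * Wn W x y ^ (s/(s+ρ))) = ∏ j, aY (y j) := by
    intro y
    have hterm : ∀ x : Fin N → 𝓧, π x * Wn W x y ^ (s/(s+ρ))
        = ∏ j, (P (x j) * W (x j) (y j) ^ (s/(s+ρ))) := by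
      intro x
      rw [hπdef, Wn, ← Real.finset_prod_rpow _ _ (fun j _ => hW0 _ _) _,
        Finset.prod_mul_distrib]
    rw [Finset.sum_congr rfl fun x _ => hterm x]
    exact sum_prod_pi (fun j X => P X * W X (y j) ^ (s/(s+ρ)))
  have hbsum : ∀ y : Fin N → 𝓨,
      (∑ xt : Fin N → 𝓧, (∏ j, Q (xt j)) * Wn W xt y) = ∏ j, bY (y j) := by
    intro y
    have hterm : ∀ xt : Fin N → 𝓧, (∏ j, Q (xt j)) * Wn W xt y
        = ∏ j, (Q (xt j) * W (xt j) (y j)) := by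
      intro xt
      rw [Wn, Finset.prod_mul_distrib]
    rw [Finset.sum_congr rfl fun x _ => hterm x]
    exact sum_prod_pi (fun j X => Q X * W X (y j))
  -- per-y threshold
  have key : ∀ y : Fin N → 𝓨, ∃ T : ℝ, 0 < T ∧
      (∑ x : Fin N → 𝓧, π x * Wn W x y * (if Wn W x y ≤ T then (1:ℝ) else 0))
        ≤ (L:ℝ) ^ ρ * (∏ j, aY (y j)) ^ (s+ρ) * (∏ j, bY (y j)) ^ (1-s) ∧
      (∏ j, bY (y j)) *
          min 1 ((L:ℝ) * ∑ x : Fin N → 𝓧, π x * (if T < Wn W x y then (1:ℝ) else 0))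
        ≤ (L:ℝ) ^ ρ * (∏ j, aY (y j)) ^ (s+ρ) * (∏ j, bY (y j)) ^ (1-s) := by
    intro y
    have hbnn : 0 ≤ ∏ j, bY (y j) := Finset.prod_nonneg fun j _ => hbYnn _
    obtain ⟨T, hT, h1, h2⟩ := core_threshold π (fun x => Wn W x y) hπ0 hπ1
      (fun x => hWn0 x y) (fun x => hWn1 x y) (∏ j, bY (y j)) (L:ℝ) ρ s
      hbnn hLr1 hρ0 hρ1 hs0 hs1
    rw [hwsum y] at h1 h2
    exact ⟨T, hT, h1, h2⟩
  choose T hT0 hTa hTb using key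
  set τ : (Fin N → 𝓨) → ℝ := fun y => -Real.log (T y) / N with hτdef
  have hexp : ∀ y, Real.exp (-((N:ℝ) * τ y)) = T y := by
    intro y
    have hN0 : (N:ℝ) ≠ 0 := Nat.cast_ne_zero.mpr (by omega)
    have h1 : -((N:ℝ) * τ y) = Real.log (T y) := by
      rw [hτdef]
      field_simp
    rw [h1, Real.exp_log (hT0 y)]
  -- RHS identity
  have hRHS : (∑ y : Fin N → 𝓨,
        (L:ℝ) ^ ρ * (∏ j, aY (y j)) ^ (s+ρ) * (∏ j, bY (y j)) ^ (1-s))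
      = (L:ℝ) ^ ρ * (∑ Y : 𝓨, aY Y ^ (s+ρ) * bY Y ^ (1-s)) ^ N := by
    have h1 : ∀ y : Fin N → 𝓨,
        (L:ℝ) ^ ρ * (∏ j, aY (y j)) ^ (s+ρ) * (∏ j, bY (y j)) ^ (1-s)
        = (L:ℝ) ^ ρ * ∏ j, (aY (y j) ^ (s+ρ) * bY (y j) ^ (1-s)) := by
      intro y
      rw [← Real.finset_prod_rpow _ _ (fun j _ => haYnn _) _,
        ← Real.finset_prod_rpow _ _ (fun j _ => hbYnn _) _,
        Finset.prod_mul_distrib, mul_assoc]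
    rw [Finset.sum_congr rfl fun y _ => h1 y, ← Finset.mul_sum,
      sum_prod_pi (fun _ Y => aY Y ^ (s+ρ) * bY Y ^ (1-s))]
    simp [Finset.prod_const]
  refine ⟨τ, ?_, ?_⟩
  · -- (a)
    calc ∑ x : Fin N → 𝓧, ∑ y : Fin N → 𝓨,
          π x * Wn W x y * (if Wn W x y ≤ Real.exp (-((N : ℝ) * τ y)) then (1:ℝ) else 0)
        = ∑ y : Fin N → 𝓨, ∑ x : Fin N → 𝓧,
            π x * Wn W x y * (if Wn W x y ≤ T y then (1:ℝ) else 0) := by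
          rw [Finset.sum_comm]
          exact Finset.sum_congr rfl fun y _ => Finset.sum_congr rfl fun x _ => by
            rw [hexp y]
      _ ≤ ∑ y : Fin N → 𝓨,
            (L:ℝ) ^ ρ * (∏ j, aY (y j)) ^ (s+ρ) * (∏ j, bY (y j)) ^ (1-s) :=
          Finset.sum_le_sum fun y _ => hTa y
      _ = (L:ℝ) ^ ρ * (∑ Y : 𝓨, aY Y ^ (s+ρ) * bY Y ^ (1-s)) ^ N := hRHS
  · -- (b)
    have hxwsum1 : (∑ xw : Fin L → Fin N → 𝓧, ∏ w, π (xw w)) = 1 := by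
      rw [sum_prod_pi (fun _ x => π x)]
      simp [hπ1]
    have hmarg : ∀ (y : Fin N → 𝓨) (w0 : Fin L),
        (∑ xw : Fin L → Fin N → 𝓧,
          (∏ w, π (xw w)) * (if T y < Wn W (xw w0) y then (1:ℝ) else 0))
        = ∑ x : Fin N → 𝓧, π x * (if T y < Wn W x y then (1:ℝ) else 0) := by
      intro y w0
      have hterm : ∀ xw : Fin L → Fin N → 𝓧,
          (∏ w, π (xw w)) * (if T y < Wn W (xw w0) y then (1:ℝ) else 0)
          = ∏ w, (π (xw w) * (if w = w0 then
              (if T y < Wn W (xw w) y then (1:ℝ) else 0) else 1)) := by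
        intro xw
        rw [Finset.prod_mul_distrib]
        congr 1
        rw [Finset.prod_ite_eq' Finset.univ w0
          (fun w => if T y < Wn W (xw w) y then (1:ℝ) else 0)]
        simp
      rw [Finset.sum_congr rfl fun xw _ => hterm xw,
        sum_prod_pi (fun w x => π x * (if w = w0 then
          (if T y < Wn W x y then (1:ℝ) else 0) else 1))]
      have hfac : ∀ w : Fin L,
          (∑ x : Fin N → 𝓧, π x * (if w = w0 then
            (if T y < Wn W x y then (1:ℝ) else 0) else 1))
          = if w = w0 then
              (∑ x : Fin N → 𝓧, π x * (if T y < Wn W x y then (1:ℝ) else 0)) else 1 := by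
        intro w
        by_cases h : w = w0
        · simp [h]
        · simp [h, hπ1]
      rw [Finset.prod_congr rfl fun w _ => hfac w]
      rw [Finset.prod_ite_eq' Finset.univ w0 (fun _ =>
        (∑ x : Fin N → 𝓧, π x * (if T y < Wn W x y then (1:ℝ) else 0)))]
      simp
    have hxw : ∀ y : Fin N → 𝓨,
        (∑ xw : Fin L → Fin N → 𝓧, (∏ w, ∏ j, P (xw w j)) *
          (if ∃ w, T y < Wn W (xw w) y then (1:ℝ) else 0))
        ≤ min 1 ((L:ℝ) *
            ∑ x : Fin N → 𝓧, π x * (if T y < Wn W x y then (1:ℝ) else 0)) := by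
      intro y
      have hπL0 : ∀ xw : Fin L → Fin N → 𝓧, 0 ≤ ∏ w, π (xw w) :=
        fun xw => Finset.prod_nonneg fun w _ => hπ0 _
      apply le_min
      · calc (∑ xw : Fin L → Fin N → 𝓧, (∏ w, ∏ j, P (xw w j)) *
              (if ∃ w, T y < Wn W (xw w) y then (1:ℝ) else 0))
            ≤ ∑ xw : Fin L → Fin N → 𝓧, ∏ w, π (xw w) := by
              apply Finset.sum_le_sum
              intro xw _
              have : (if ∃ w, T y < Wn W (xw w) y then (1:ℝ) else 0) ≤ 1 := by
                split <;> norm_num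
              calc (∏ w, π (xw w)) * (if ∃ w, T y < Wn W (xw w) y then (1:ℝ) else 0)
                  ≤ (∏ w, π (xw w)) * 1 :=
                    mul_le_mul_of_nonneg_left this (hπL0 xw)
                _ = ∏ w, π (xw w) := mul_one _
          _ = 1 := hxwsum1
      · calc (∑ xw : Fin L → Fin N → 𝓧, (∏ w, ∏ j, P (xw w j)) *
              (if ∃ w, T y < Wn W (xw w) y then (1:ℝ) else 0))
            ≤ ∑ xw : Fin L → Fin N → 𝓧, (∏ w, π (xw w)) *
              (∑ w0, if T y < Wn W (xw w0) y then (1:ℝ) else 0) := by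
              apply Finset.sum_le_sum
              intro xw _
              apply mul_le_mul_of_nonneg_left _ (hπL0 xw)
              by_cases h : ∃ w, T y < Wn W (xw w) y
              · simp only [h, if_true]
                obtain ⟨w0, hw0⟩ := h
                calc (1:ℝ) = if T y < Wn W (xw w0) y then (1:ℝ) else 0 := by simp [hw0]
                  _ ≤ ∑ w1, if T y < Wn W (xw w1) y then (1:ℝ) else 0 :=
                    Finset.single_le_sum
                      (f := fun w1 => if T y < Wn W (xw w1) y then (1:ℝ) else 0)
                      (fun w1 _ => by by_cases h1 : T y < Wn W (xw w1) y <;> simp [h1])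
                      (Finset.mem_univ w0)
              · simp only [h, if_false]
                apply Finset.sum_nonneg
                intro w1 _
                split <;> norm_num
          _ = ∑ w0 : Fin L, ∑ xw : Fin L → Fin N → 𝓧, (∏ w, π (xw w)) *
                (if T y < Wn W (xw w0) y then (1:ℝ) else 0) := by
              rw [Finset.sum_comm]
              exact Finset.sum_congr rfl fun xw _ => Finset.mul_sum _ _ _
          _ = ∑ w0 : Fin L, ∑ x : Fin N → 𝓧, π x *
                (if T y < Wn W x y then (1:ℝ) else 0) :=
              Finset.sum_congr rfl fun w0 _ => hmarg y w0
          _ = (L:ℝ) * ∑ x : Fin N → 𝓧, π x * (if T y < Wn W x y then (1:ℝ) else 0) := by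
              rw [Finset.sum_const, Finset.card_univ, Fintype.card_fin, nsmul_eq_mul]
    calc ∑ xt : Fin N → 𝓧, ∑ xw : Fin L → Fin N → 𝓧, ∑ y : Fin N → 𝓨,
          (∏ j, Q (xt j)) * (∏ w, ∏ j, P (xw w j)) * Wn W xt y *
            (if ∃ w, Real.exp (-((N : ℝ) * τ y)) < Wn W (xw w) y then (1:ℝ) else 0)
        = ∑ y : Fin N → 𝓨, (∑ xt : Fin N → 𝓧, (∏ j, Q (xt j)) * Wn W xt y) *
            (∑ xw : Fin L → Fin N → 𝓧, (∏ w, ∏ j, P (xw w j)) *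
              (if ∃ w, T y < Wn W (xw w) y then (1:ℝ) else 0)) := by
          have hre : ∀ (xt : Fin N → 𝓧) (xw : Fin L → Fin N → 𝓧) (y : Fin N → 𝓨),
              (∏ j, Q (xt j)) * (∏ w, ∏ j, P (xw w j)) * Wn W xt y *
                (if ∃ w, Real.exp (-((N : ℝ) * τ y)) < Wn W (xw w) y then (1:ℝ) else 0)
              = ((∏ j, Q (xt j)) * Wn W xt y) * ((∏ w, ∏ j, P (xw w j)) *
                (if ∃ w, T y < Wn W (xw w) y then (1:ℝ) else 0)) := by
            intro xt xw y
            rw [hexp y]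
            ring
          calc ∑ xt : Fin N → 𝓧, ∑ xw : Fin L → Fin N → 𝓧, ∑ y : Fin N → 𝓨,
                (∏ j, Q (xt j)) * (∏ w, ∏ j, P (xw w j)) * Wn W xt y *
                  (if ∃ w, Real.exp (-((N : ℝ) * τ y)) < Wn W (xw w) y then (1:ℝ) else 0)
              = ∑ xt : Fin N → 𝓧, ∑ xw : Fin L → Fin N → 𝓧, ∑ y : Fin N → 𝓨,
                  ((∏ j, Q (xt j)) * Wn W xt y) * ((∏ w, ∏ j, P (xw w j)) *
                    (if ∃ w, T y < Wn W (xw w) y then (1:ℝ) else 0)) :=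
                Finset.sum_congr rfl fun xt _ => Finset.sum_congr rfl fun xw _ =>
                  Finset.sum_congr rfl fun y _ => hre xt xw y
            _ = ∑ xt : Fin N → 𝓧, ∑ y : Fin N → 𝓨,
                  ((∏ j, Q (xt j)) * Wn W xt y) * (∑ xw : Fin L → Fin N → 𝓧,
                    (∏ w, ∏ j, P (xw w j)) *
                      (if ∃ w, T y < Wn W (xw w) y then (1:ℝ) else 0)) := by
                refine Finset.sum_congr rfl fun xt _ => ?_
                rw [Finset.sum_comm]
                exact Finset.sum_congr rfl fun y _ => (Finset.mul_sum _ _ _).symm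
            _ = ∑ y : Fin N → 𝓨, ∑ xt : Fin N → 𝓧,
                  ((∏ j, Q (xt j)) * Wn W xt y) * (∑ xw : Fin L → Fin N → 𝓧,
                    (∏ w, ∏ j, P (xw w j)) *
                      (if ∃ w, T y < Wn W (xw w) y then (1:ℝ) else 0)) :=
                Finset.sum_comm
            _ = ∑ y : Fin N → 𝓨, (∑ xt : Fin N → 𝓧, (∏ j, Q (xt j)) * Wn W xt y) *
                  (∑ xw : Fin L → Fin N → 𝓧, (∏ w, ∏ j, P (xw w j)) *
                    (if ∃ w, T y < Wn W (xw w) y then (1:ℝ) else 0)) :=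
                Finset.sum_congr rfl fun y _ => (Finset.sum_mul _ _ _).symm
      _ ≤ ∑ y : Fin N → 𝓨, (∏ j, bY (y j)) *
            min 1 ((L:ℝ) * ∑ x : Fin N → 𝓧, π x *
              (if T y < Wn W x y then (1:ℝ) else 0)) := by
          apply Finset.sum_le_sum
          intro y _
          rw [hbsum y]
          exact mul_le_mul_of_nonneg_left (hxw y)
            (Finset.prod_nonneg fun j _ => hbYnn _)
      _ ≤ ∑ y : Fin N → 𝓨,
            (L:ℝ) ^ ρ * (∏ j, aY (y j)) ^ (s+ρ) * (∏ j, bY (y j)) ^ (1-s) :=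
          Finset.sum_le_sum fun y _ => hTb y
      _ = (L:ℝ) ^ ρ * (∑ Y : 𝓨, aY Y ^ (s+ρ) * bY Y ^ (1-s)) ^ N := hRHS
end
end
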